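/- arXiv:2112.06679 — 4 statements merged into one kernel-verified Lean document; each statement's English description precedes it below -/
import Mathlib

section
/- For all integers m ≥ 2 and l ≥ 0, the chromatic symmetric function of the line graph of the tadpole satisfies X_{L(Tp_{m,l})} = X_{P_l}·X_{C_m} + 2·Σ_{k=1}^{l} X_{P_{l−k}}·X_{C_{m+k}} − 2l·X_{P_{m+l}}. -/
open Finset

noncomputable section

/-- The ring in which symmetric functions live: formal power series in the
countably many commuting variables `x_0, x_1, x_2, …` with rational coefficients. -/
abbrev SymFun : Type := MvPowerSeries ℕ ℚ

/-- The chromatic symmetric function of a finite graph `G`: the coefficient of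
the monomial `∏ i, x_i ^ d i` is the number of proper colorings `κ : V → ℕ`
whose color-class sizes are prescribed by `d`. -/
def csf {V : Type} [Fintype V] (G : SimpleGraph V) : SymFun :=
  fun d => (Nat.card {κ : V → ℕ //
    (∀ v w : V, G.Adj v w → κ v ≠ κ w) ∧
    ∀ i : ℕ, Nat.card {v : V // κ v = i} = d i} : ℚ)

/-- The path `P_n` on `n` vertices. -/
def pathG (n : ℕ) : SimpleGraph (Fin n) :=
  SimpleGraph.fromRel (fun i j => (i : ℕ) + 1 = (j : ℕ))

/-- The cycle `C_n` on `n` vertices (for `n = 2` this is the single edge `K₂`). -/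
def cycleG (n : ℕ) : SimpleGraph (Fin n) :=
  SimpleGraph.fromRel (fun i j => ((i : ℕ) + 1) % n = (j : ℕ))

/-- The tadpole `Tp_{m,l}`: the disjoint union of the cycle `C_m` and the path `P_l`
together with one edge joining a vertex of the cycle to an end of the path. -/
def tadpole (m l : ℕ) : SimpleGraph (Fin m ⊕ Fin l) :=
  SimpleGraph.fromRel (fun a b =>
    match a, b with
    | Sum.inl i, Sum.inl j => ((i : ℕ) + 1) % m = (j : ℕ)
    | Sum.inr i, Sum.inr j => (i : ℕ) + 1 = (j : ℕ)
    | Sum.inl i, Sum.inr j => (i : ℕ) = 0 ∧ (j : ℕ) = 0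
    | _, _ => False)

/-- The line graph of the tadpole `Tp_{m,l}`, described explicitly:
the disjoint union of the cycle `C_m` and the path `P_l` together with two edges
joining an end `w` of the path to two adjacent vertices `u, v` of the cycle. -/
def lineTadpole (m l : ℕ) : SimpleGraph (Fin m ⊕ Fin l) :=
  SimpleGraph.fromRel (fun a b =>
    match a, b with
    | Sum.inl i, Sum.inl j => ((i : ℕ) + 1) % m = (j : ℕ)
    | Sum.inr i, Sum.inr j => (i : ℕ) + 1 = (j : ℕ)
    | Sum.inl i, Sum.inr j => ((i : ℕ) = 0 ∨ (i : ℕ) = 1) ∧ (j : ℕ) = 0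
    | _, _ => False)

/-- The cycle-chord graph `CC_{a,b}`: the cycle `C_{a+b}` on vertices
`v_0, …, v_{a+b-1}` together with the chord `v_0 v_a`. -/
def cycleChord (a b : ℕ) : SimpleGraph (Fin (a + b)) :=
  SimpleGraph.fromRel (fun i j =>
    ((i : ℕ) + 1) % (a + b) = (j : ℕ) ∨ ((i : ℕ) = 0 ∧ (j : ℕ) = a))

open Classical in
/-- The elementary symmetric function `e_r`. -/
def eSym (r : ℕ) : SymFun :=
  fun d => if (∀ i, d i ≤ 1) ∧ (d.sum fun _ k => k) = r then 1 else 0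

open Classical in
/-- The power sum symmetric function `p_n = Σ_i x_i^n` (for `n ≥ 1`). -/
def pSym (n : ℕ) : SymFun :=
  fun d => if n ≠ 0 ∧ ∃ i : ℕ, d = Finsupp.single i n then 1 else 0

/-- `e_λ = e_{λ_1} ⋯ e_{λ_k}` for a partition `λ` of `n`. -/
def eProd {n : ℕ} (P : n.Partition) : SymFun := (P.parts.map eSym).prod

/-- The ring of formal power series in two variables `x = X 0` and `y = X 1`
over the ring of symmetric functions. -/
abbrev Big : Type := MvPowerSeries (Fin 2) SymFun

/-- The bivariate generating function `Σ_{a,b ≥ 0} c a b · x^a y^b`. -/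
def gf2 (c : ℕ → ℕ → SymFun) : Big := fun d => c (d 0) (d 1)

/-- The variable `x`. -/
def Xv : Big := MvPowerSeries.X 0
/-- The variable `y`. -/
def Yv : Big := MvPowerSeries.X 1

/-- `E(z) = Σ_{n≥0} e_n z^n`, where `z` is the variable `X v`. -/
def Eser (v : Fin 2) : Big :=
  fun d => if ∀ w, w ≠ v → d w = 0 then eSym (d v) else 0

/-- `E'(z) = Σ_{n≥0} (n+1) e_{n+1} z^n`. -/
def Eser' (v : Fin 2) : Big :=
  fun d => if ∀ w, w ≠ v → d w = 0 then ((d v + 1 : ℕ) : SymFun) * eSym (d v + 1) else 0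

/-- `E''(z) = Σ_{n≥0} (n+1)(n+2) e_{n+2} z^n`. -/
def Eser'' (v : Fin 2) : Big :=
  fun d => if ∀ w, w ≠ v → d w = 0 then (((d v + 1) * (d v + 2) : ℕ) : SymFun) * eSym (d v + 2) else 0

/-- `F(z) = E(z) - z E'(z) = Σ_{n≥0} (1-n) e_n z^n`. -/
def Fser (v : Fin 2) : Big :=
  fun d => if ∀ w, w ≠ v → d w = 0 then eSym (d v) - ((d v : ℕ) : SymFun) * eSym (d v) else 0

/-- The partial derivative of a bivariate series with respect to the variable `X v`. -/
def pderiv2 (v : Fin 2) (f : Big) : Big :=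
  fun d => ((d v + 1 : ℕ) : SymFun) * f (d + Finsupp.single v 1)

-- ===== Infrastructure =====
set_option linter.unusedSectionVars false
section Infra

variable {V : Type} [Fintype V]

/-- The set of proper colorings with color class sizes `d`. -/
def properSet (G : SimpleGraph V) (d : ℕ →₀ ℕ) : Set (V → ℕ) :=
  {κ | (∀ v w : V, G.Adj v w → κ v ≠ κ w) ∧ ∀ i : ℕ, Nat.card {v : V // κ v = i} = d i}

lemma csf_apply (G : SimpleGraph V) (d : ℕ →₀ ℕ) :
    csf G d = ((properSet G d).ncard : ℚ) := rfl

lemma properSet_finite (G : SimpleGraph V) (d : ℕ →₀ ℕ) : (properSet G d).Finite := by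
  classical
  apply Set.Finite.subset
    (Set.Finite.pi (t := fun _ : V => (↑d.support : Set ℕ)) fun _ => d.support.finite_toSet)
  intro κ hκ
  rw [Set.mem_pi]
  intro v _
  have h := hκ.2 (κ v)
  simp only [Finset.mem_coe, Finsupp.mem_support_iff]
  intro h0
  rw [h0] at h
  haveI : Nonempty {w : V // κ w = κ v} := ⟨⟨v, rfl⟩⟩
  have : 0 < Nat.card {w : V // κ w = κ v} := Nat.card_pos
  omega

/-- Add an edge between `a` and `b` to a graph. -/
def addEdge (G : SimpleGraph V) (a b : V) : SimpleGraph V :=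
  G ⊔ SimpleGraph.fromRel (fun x y => x = a ∧ y = b)

lemma addEdge_adj (G : SimpleGraph V) (a b x y : V) :
    (addEdge G a b).Adj x y ↔ G.Adj x y ∨ (x ≠ y ∧ ((x = a ∧ y = b) ∨ (y = a ∧ x = b))) := by
  simp only [addEdge, SimpleGraph.sup_adj, SimpleGraph.fromRel_adj]

lemma properSet_addEdge {G : SimpleGraph V} {a b : V} (hab : a ≠ b) (d : ℕ →₀ ℕ) :
    properSet (addEdge G a b) d = {κ ∈ properSet G d | κ a ≠ κ b} := by
  ext κ
  constructor
  · rintro ⟨h1, h2⟩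
    exact ⟨⟨fun v w hvw => h1 v w (by rw [addEdge_adj]; left; exact hvw), h2⟩,
      h1 a b (by rw [addEdge_adj]; right; exact ⟨hab, Or.inl ⟨rfl, rfl⟩⟩)⟩
  · rintro ⟨⟨h1, h2⟩, h3⟩
    refine ⟨fun v w hvw => ?_, h2⟩
    rw [addEdge_adj] at hvw
    rcases hvw with h | ⟨hne, ⟨rfl, rfl⟩ | ⟨rfl, rfl⟩⟩
    · exact h1 _ _ h
    · exact h3
    · exact fun e => h3 e.symm

lemma csf_tripleDeletion (G : SimpleGraph V) (u v w : V)
    (huv : G.Adj u v) (hwu : w ≠ u) (hwv : w ≠ v) :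
    csf (addEdge (addEdge G w u) w v) + csf G
      = csf (addEdge G w u) + csf (addEdge G w v) := by
  funext d
  show csf (addEdge (addEdge G w u) w v) d + csf G d
      = csf (addEdge G w u) d + csf (addEdge G w v) d
  simp only [csf_apply]
  set S := properSet G d with hS
  set S1 := {κ ∈ S | κ w = κ u} with hS1
  set S2 := {κ ∈ S | κ w = κ v} with hS2
  have hSfin : S.Finite := properSet_finite G d
  have h1sub : S1 ⊆ S := Set.sep_subset _ _
  have h2sub : S2 ⊆ S := Set.sep_subset _ _
  have hwuG : properSet (addEdge G w u) d = S \ S1 := by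
    rw [properSet_addEdge hwu d]; ext κ; simp only [Set.mem_sep_iff, Set.mem_diff, hS1,
      Set.mem_setOf_eq]; tauto
  have hwvG : properSet (addEdge G w v) d = S \ S2 := by
    rw [properSet_addEdge hwv d]; ext κ; simp only [Set.mem_sep_iff, Set.mem_diff, hS2,
      Set.mem_setOf_eq]; tauto
  have hbothG : properSet (addEdge (addEdge G w u) w v) d = S \ (S1 ∪ S2) := by
    rw [properSet_addEdge hwv d, hwuG]
    ext κ
    simp only [Set.mem_sep_iff, Set.mem_diff, Set.mem_union, hS1, hS2, Set.mem_setOf_eq]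
    tauto
  have hdisj : Disjoint S1 S2 := by
    rw [Set.disjoint_left]
    rintro κ ⟨hκ, h1⟩ ⟨_, h2⟩
    exact hκ.1 u v huv (h1 ▸ h2 ▸ rfl)
  have hU : (S1 ∪ S2).ncard = S1.ncard + S2.ncard :=
    Set.ncard_union_eq hdisj (hSfin.subset h1sub) (hSfin.subset h2sub)
  have e1 : (S \ S1).ncard = S.ncard - S1.ncard := Set.ncard_diff h1sub (hSfin.subset h1sub)
  have e2 : (S \ S2).ncard = S.ncard - S2.ncard := Set.ncard_diff h2sub (hSfin.subset h2sub)
  have e3 : (S \ (S1 ∪ S2)).ncard = S.ncard - (S1.ncard + S2.ncard) := by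
    rw [Set.ncard_diff (Set.union_subset h1sub h2sub)
      ((hSfin.subset h1sub).union (hSfin.subset h2sub)), hU]
  have le1 : S1.ncard + S2.ncard ≤ S.ncard := by
    rw [← hU]; exact Set.ncard_le_ncard (Set.union_subset h1sub h2sub) hSfin
  rw [hbothG, hwuG, hwvG, e1, e2, e3]
  have : S.ncard - (S1.ncard + S2.ncard) + S.ncard = (S.ncard - S1.ncard) + (S.ncard - S2.ncard) := by
    omega
  exact_mod_cast congrArg (fun n : ℕ => (n : ℚ)) this

end Infra
section Infra2
set_option linter.unusedSectionVars false

lemma Nat.card_sigma' {ι : Type} [Fintype ι] (f : ι → Type) [∀ i, Finite (f i)] :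
    Nat.card (Σ i, f i) = ∑ i, Nat.card (f i) := by
  letI : ∀ i, Fintype (f i) := fun i => Fintype.ofFinite _
  rw [Nat.card_eq_fintype_card, Fintype.card_sigma]
  exact Finset.sum_congr rfl fun i _ => (Nat.card_eq_fintype_card).symm

/-- Disjoint union of graphs. -/
def sumGraph {V W : Type} (G : SimpleGraph V) (H : SimpleGraph W) : SimpleGraph (V ⊕ W) :=
  SimpleGraph.fromRel (fun a b =>
    match a, b with
    | Sum.inl x, Sum.inl y => G.Adj x y
    | Sum.inr x, Sum.inr y => H.Adj x y
    | _, _ => False)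

@[simp] lemma sumGraph_adj_inl_inl {V W : Type} (G : SimpleGraph V) (H : SimpleGraph W)
    (a b : V) : (sumGraph G H).Adj (Sum.inl a) (Sum.inl b) ↔ G.Adj a b := by
  simp only [sumGraph, SimpleGraph.fromRel_adj, ne_eq, Sum.inl.injEq]
  constructor
  · rintro ⟨h, h1 | h1⟩
    · exact h1
    · exact h1.symm
  · intro h
    exact ⟨fun e => G.loopless.irrefl a (e ▸ h), Or.inl h⟩

@[simp] lemma sumGraph_adj_inr_inr {V W : Type} (G : SimpleGraph V) (H : SimpleGraph W)
    (a b : W) : (sumGraph G H).Adj (Sum.inr a) (Sum.inr b) ↔ H.Adj a b := by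
  simp only [sumGraph, SimpleGraph.fromRel_adj, ne_eq, Sum.inr.injEq]
  constructor
  · rintro ⟨h, h1 | h1⟩
    · exact h1
    · exact h1.symm
  · intro h
    exact ⟨fun e => H.loopless.irrefl a (e ▸ h), Or.inl h⟩

@[simp] lemma sumGraph_adj_inl_inr {V W : Type} (G : SimpleGraph V) (H : SimpleGraph W)
    (a : V) (b : W) : ¬ (sumGraph G H).Adj (Sum.inl a) (Sum.inr b) := by
  simp [sumGraph, SimpleGraph.fromRel_adj]

@[simp] lemma sumGraph_adj_inr_inl {V W : Type} (G : SimpleGraph V) (H : SimpleGraph W)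
    (a : W) (b : V) : ¬ (sumGraph G H).Adj (Sum.inr a) (Sum.inl b) := by
  simp [sumGraph, SimpleGraph.fromRel_adj]

/-- Subtype of a sum splits as a sum of subtypes. -/
def sumSubtypeEquiv {V W : Type} (P : V ⊕ W → Prop) :
    {x : V ⊕ W // P x} ≃ {v : V // P (Sum.inl v)} ⊕ {w : W // P (Sum.inr w)} where
  toFun x := match x with
    | ⟨Sum.inl v, h⟩ => Sum.inl ⟨v, h⟩
    | ⟨Sum.inr w, h⟩ => Sum.inr ⟨w, h⟩
  invFun y := match y with
    | Sum.inl ⟨v, h⟩ => ⟨Sum.inl v, h⟩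
    | Sum.inr ⟨w, h⟩ => ⟨Sum.inr w, h⟩
  left_inv := by rintro ⟨(v | w), h⟩ <;> rfl
  right_inv := by rintro (⟨v, h⟩ | ⟨w, h⟩) <;> rfl

lemma card_sum_split {V W : Type} [Fintype V] [Fintype W] (κ : V ⊕ W → ℕ) (i : ℕ) :
    Nat.card {x : V ⊕ W // κ x = i}
      = Nat.card {v : V // κ (Sum.inl v) = i} + Nat.card {w : W // κ (Sum.inr w) = i} := by
  rw [Nat.card_congr (sumSubtypeEquiv (fun x => κ x = i)), Nat.card_sum]

lemma csf_sumGraph {V W : Type} [Fintype V] [Fintype W] (G : SimpleGraph V)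
    (H : SimpleGraph W) : csf (sumGraph G H) = csf G * csf H := by
  classical
  apply MvPowerSeries.ext
  intro d
  rw [MvPowerSeries.coeff_mul]
  show csf (sumGraph G H) d = ∑ p ∈ Finset.HasAntidiagonal.antidiagonal d, csf G p.1 * csf H p.2
  -- the equivalence
  have key : Nat.card ↥(properSet (sumGraph G H) d)
      = ∑ p ∈ Finset.HasAntidiagonal.antidiagonal d,
          Nat.card ↥(properSet G p.1) * Nat.card ↥(properSet H p.2) := by
    haveI : ∀ p : Finset.HasAntidiagonal.antidiagonal d,
        Finite (↥(properSet G (p.1 : (ℕ →₀ ℕ) × (ℕ →₀ ℕ)).1) ×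
          ↥(properSet H (p.1 : (ℕ →₀ ℕ) × (ℕ →₀ ℕ)).2)) := by
      intro p
      haveI := (properSet_finite G (p.1).1).to_subtype
      haveI := (properSet_finite H (p.1).2).to_subtype
      infer_instance
    have hcard : Nat.card ↥(properSet (sumGraph G H) d)
        = Nat.card (Σ p : Finset.HasAntidiagonal.antidiagonal d,
            ↥(properSet G (p.1).1) × ↥(properSet H (p.1).2)) := by
      apply Nat.card_congr
      apply Equiv.symm
      -- forward map: glue
      refine Equiv.ofBijective (fun x =>
        ⟨Sum.elim (x.2.1 : V → ℕ) (x.2.2 : W → ℕ), ?_⟩) ⟨?_, ?_⟩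
      · -- membership
        obtain ⟨⟨p, hp⟩, ⟨κ1, h1⟩, ⟨κ2, h2⟩⟩ := x
        rw [Finset.HasAntidiagonal.mem_antidiagonal] at hp
        constructor
        · rintro (a | a) (b | b) hab <;> simp only [Sum.elim_inl, Sum.elim_inr]
          · exact h1.1 a b (by simpa using hab)
          · simp at hab
          · simp at hab
          · exact h2.1 a b (by simpa using hab)
        · intro i
          rw [card_sum_split]
          simp only [Sum.elim_inl, Sum.elim_inr]
          rw [h1.2 i, h2.2 i, ← Finsupp.add_apply, hp]
      · -- injective
        rintro ⟨⟨p, hp⟩, ⟨κ1, h1⟩, ⟨κ2, h2⟩⟩ ⟨⟨q, hq⟩, ⟨mu1, g1⟩, ⟨mu2, g2⟩⟩ heq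
        simp only [Subtype.mk.injEq] at heq
        have hκ1 : κ1 = mu1 := funext fun a => congrFun heq (Sum.inl a)
        have hκ2 : κ2 = mu2 := funext fun a => congrFun heq (Sum.inr a)
        subst hκ1; subst hκ2
        have hpq : p = q := by
          ext1
          · ext i; rw [← h1.2 i, ← g1.2 i]
          · ext i; rw [← h2.2 i, ← g2.2 i]
        subst hpq
        rfl
      · -- surjective
        rintro ⟨κ, hκ⟩
        have hfin1 : ∀ i, Nat.card {v : V // κ (Sum.inl v) = i} ≤ d i := by
          intro i
          rw [← hκ.2 i, card_sum_split]
          omega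
        set d1 : ℕ →₀ ℕ := Finsupp.ofSupportFinite (fun i => Nat.card {v : V // κ (Sum.inl v) = i})
          (Set.Finite.subset d.finite_support (by
            intro i hi
            simp only [Function.mem_support] at hi
            simp only [Finsupp.fun_support_eq, Finset.mem_coe, Finsupp.mem_support_iff]
            have := hfin1 i
            omega)) with hd1
        set d2 : ℕ →₀ ℕ := Finsupp.ofSupportFinite (fun i => Nat.card {w : W // κ (Sum.inr w) = i})
          (Set.Finite.subset d.finite_support (by
            intro i hi
            simp only [Function.mem_support] at hi
            simp only [Finsupp.fun_support_eq, Finset.mem_coe, Finsupp.mem_support_iff]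
            have h := hκ.2 i
            rw [card_sum_split] at h
            omega)) with hd2
        have hd1a : ∀ i, d1 i = Nat.card {v : V // κ (Sum.inl v) = i} := fun i => rfl
        have hd2a : ∀ i, d2 i = Nat.card {w : W // κ (Sum.inr w) = i} := fun i => rfl
        have hmem : (d1, d2) ∈ Finset.HasAntidiagonal.antidiagonal d := by
          rw [Finset.HasAntidiagonal.mem_antidiagonal]
          ext i
          rw [Finsupp.add_apply, hd1a, hd2a, ← card_sum_split, hκ.2 i]
        refine ⟨⟨⟨(d1, d2), hmem⟩, ⟨fun v => κ (Sum.inl v), ?_⟩, ⟨fun w => κ (Sum.inr w), ?_⟩⟩, ?_⟩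
        · exact ⟨fun a b hab => hκ.1 _ _ (by simpa using hab), fun i => (hd1a i).symm⟩
        · exact ⟨fun a b hab => hκ.1 _ _ (by simpa using hab), fun i => (hd2a i).symm⟩
        · apply Subtype.ext
          funext x
          cases x <;> rfl
    rw [hcard, Nat.card_sigma']
    rw [← Finset.sum_attach (Finset.HasAntidiagonal.antidiagonal d)
      (fun p => Nat.card ↥(properSet G p.1) * Nat.card ↥(properSet H p.2))]
    exact Finset.sum_congr rfl fun p _ => Nat.card_prod _ _
  show ((Nat.card ↥(properSet (sumGraph G H) d) : ℕ) : ℚ) = _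
  rw [key]
  push_cast
  rfl

end Infra2
section Infra3
set_option linter.unusedSectionVars false

lemma csf_congr {V W : Type} [Fintype V] [Fintype W] (G : SimpleGraph V) (H : SimpleGraph W)
    (e : V ≃ W) (he : ∀ a b : V, G.Adj a b ↔ H.Adj (e a) (e b)) : csf G = csf H := by
  funext d
  show (Nat.card _ : ℚ) = (Nat.card _ : ℚ)
  congr 1
  apply Nat.card_congr
  refine ⟨fun κ => ⟨fun w => κ.1 (e.symm w), ?_, ?_⟩,
          fun κ => ⟨fun v => κ.1 (e v), ?_, ?_⟩, ?_, ?_⟩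
  · intro a b hab
    have := he (e.symm a) (e.symm b)
    simp only [Equiv.apply_symm_apply] at this
    exact κ.2.1 _ _ (this.mpr hab)
  · intro i
    rw [← κ.2.2 i]
    exact Nat.card_congr (Equiv.subtypeEquiv e.symm (fun w => Iff.rfl))
  · intro a b hab
    exact κ.2.1 _ _ ((he a b).mp hab)
  · intro i
    rw [← κ.2.2 i]
    exact Nat.card_congr (Equiv.subtypeEquiv e (fun v => Iff.rfl))
  · intro κ
    apply Subtype.ext
    funext v
    simp
  · intro κ
    apply Subtype.ext
    funext w
    simp

lemma csf_pathG_zero : csf (pathG 0) = 1 := by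
  apply MvPowerSeries.ext
  intro d
  classical
  rw [MvPowerSeries.coeff_one]
  show (Nat.card _ : ℚ) = _
  split_ifs with h
  · subst h
    haveI : Unique {κ : Fin 0 → ℕ //
        (∀ v w : Fin 0, (pathG 0).Adj v w → κ v ≠ κ w) ∧
        ∀ i : ℕ, Nat.card {v : Fin 0 // κ v = i} = (0 : ℕ →₀ ℕ) i} := by
      refine ⟨⟨⟨fun x => x.elim0, fun v => v.elim0, fun i => ?_⟩⟩, fun κ => ?_⟩
      · simp only [Finsupp.coe_zero, Pi.zero_apply]
        exact Nat.card_of_isEmpty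
      · apply Subtype.ext
        funext x
        exact x.elim0
    rw [Nat.card_unique]
    norm_num
  · refine Nat.cast_eq_zero.mpr ?_
    rw [Nat.card_eq_zero]
    left
    rw [isEmpty_iff]
    rintro ⟨κ, h1, h2⟩
    apply h
    ext i
    rw [← h2 i]
    simp only [Finsupp.coe_zero, Pi.zero_apply]
    exact Nat.card_of_isEmpty

end Infra3
section Concrete
set_option linter.unusedSectionVars false
set_option maxHeartbeats 1000000

lemma mod_succ_eq_iff {a b n : ℕ} (ha : a < n) (hb : b < n) :
    (a + 1) % n = b ↔ (a + 1 = b ∨ (a + 1 = n ∧ b = 0)) := by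
  rcases Nat.lt_or_ge (a + 1) n with h | h
  · rw [Nat.mod_eq_of_lt h]
    omega
  · have he : a + 1 = n := by omega
    rw [he, Nat.mod_self]
    omega

/-- `C_M ⊔ P_L` as a graph on `Fin M ⊕ Fin L`. -/
abbrev CP (M L : ℕ) : SimpleGraph (Fin M ⊕ Fin L) := sumGraph (cycleG M) (pathG L)

lemma graph_A (m l : ℕ) :
    addEdge (CP (m+2) (l+1)) (Sum.inr ⟨0, by omega⟩) (Sum.inl ⟨0, by omega⟩)
      = tadpole (m+2) (l+1) := by
  ext x y
  have key : ∀ i j : Fin (m+2), ((i:ℕ)+1) % (m+2) = (j:ℕ) ↔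
      ((i:ℕ)+1 = j ∨ ((i:ℕ)+1 = m+2 ∧ (j:ℕ) = 0)) :=
    fun i j => mod_succ_eq_iff i.isLt j.isLt
  rcases x with i | i <;> rcases y with j | j <;>
    simp only [addEdge_adj, sumGraph_adj_inl_inl, sumGraph_adj_inr_inr, sumGraph_adj_inl_inr,
      sumGraph_adj_inr_inl, tadpole, cycleG, pathG, SimpleGraph.fromRel_adj, Sum.inl.injEq,
      Sum.inr.injEq, reduceCtorEq, Fin.ext_iff, Fin.val_mk, ne_eq, key, false_or, or_false,
      false_and, and_false, not_false_eq_true, true_and, and_true] <;>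
    omega
end Concrete
section Concrete2
set_option linter.unusedSectionVars false
set_option maxHeartbeats 1000000

/-- The "broken" base graph: cycle minus the edge `v0v1`, path, plus the edge `v1w0`.
This is a path on `m + l + 3` vertices. -/
def Pb (m l : ℕ) : SimpleGraph (Fin (m+2) ⊕ Fin (l+1)) :=
  SimpleGraph.fromRel (fun a b =>
    match a, b with
    | Sum.inl i, Sum.inl j => ((i:ℕ)+1) % (m+2) = (j:ℕ) ∧ (i:ℕ) ≠ 0
    | Sum.inr i, Sum.inr j => (i:ℕ)+1 = (j:ℕ)
    | Sum.inl i, Sum.inr j => (i:ℕ) = 1 ∧ (j:ℕ) = 0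
    | _, _ => False)

lemma graph_B (m l : ℕ) :
    addEdge (addEdge (CP (m+2) (l+1)) (Sum.inr ⟨0, by omega⟩) (Sum.inl ⟨0, by omega⟩))
        (Sum.inr ⟨0, by omega⟩) (Sum.inl ⟨1, by omega⟩)
      = lineTadpole (m+2) (l+1) := by
  ext x y
  have key : ∀ i j : Fin (m+2), ((i:ℕ)+1) % (m+2) = (j:ℕ) ↔
      ((i:ℕ)+1 = j ∨ ((i:ℕ)+1 = m+2 ∧ (j:ℕ) = 0)) :=
    fun i j => mod_succ_eq_iff i.isLt j.isLt
  rcases x with i | i <;> rcases y with j | j <;>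
    simp only [addEdge_adj, sumGraph_adj_inl_inl, sumGraph_adj_inr_inr, sumGraph_adj_inl_inr,
      sumGraph_adj_inr_inl, lineTadpole, cycleG, pathG, SimpleGraph.fromRel_adj, Sum.inl.injEq,
      Sum.inr.injEq, reduceCtorEq, Fin.ext_iff, Fin.val_mk, ne_eq, key, false_or, or_false,
      false_and, and_false, not_false_eq_true, true_and, and_true] <;>
    omega

lemma graph_B2 (m l : ℕ) :
    addEdge (addEdge (Pb m l) (Sum.inl ⟨0, by omega⟩) (Sum.inr ⟨0, by omega⟩))
        (Sum.inl ⟨0, by omega⟩) (Sum.inl ⟨1, by omega⟩)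
      = lineTadpole (m+2) (l+1) := by
  ext x y
  have key : ∀ i j : Fin (m+2), ((i:ℕ)+1) % (m+2) = (j:ℕ) ↔
      ((i:ℕ)+1 = j ∨ ((i:ℕ)+1 = m+2 ∧ (j:ℕ) = 0)) :=
    fun i j => mod_succ_eq_iff i.isLt j.isLt
  rcases x with i | i <;> rcases y with j | j <;>
    simp only [addEdge_adj, Pb, lineTadpole, SimpleGraph.fromRel_adj, Sum.inl.injEq,
      Sum.inr.injEq, reduceCtorEq, Fin.ext_iff, Fin.val_mk, ne_eq, key, false_or, or_false,
      false_and, and_false, not_false_eq_true, true_and, and_true] <;>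
    omega

lemma graph_A3 (m l : ℕ) :
    addEdge (Pb m l) (Sum.inl ⟨0, by omega⟩) (Sum.inl ⟨1, by omega⟩)
      = addEdge (CP (m+2) (l+1)) (Sum.inr ⟨0, by omega⟩) (Sum.inl ⟨1, by omega⟩) := by
  ext x y
  have key : ∀ i j : Fin (m+2), ((i:ℕ)+1) % (m+2) = (j:ℕ) ↔
      ((i:ℕ)+1 = j ∨ ((i:ℕ)+1 = m+2 ∧ (j:ℕ) = 0)) :=
    fun i j => mod_succ_eq_iff i.isLt j.isLt
  rcases x with i | i <;> rcases y with j | j <;>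
    simp only [addEdge_adj, sumGraph_adj_inl_inl, sumGraph_adj_inr_inr, sumGraph_adj_inl_inr,
      sumGraph_adj_inr_inl, Pb, cycleG, pathG, SimpleGraph.fromRel_adj, Sum.inl.injEq,
      Sum.inr.injEq, reduceCtorEq, Fin.ext_iff, Fin.val_mk, ne_eq, key, false_or, or_false,
      false_and, and_false, not_false_eq_true, true_and, and_true] <;>
    omega

end Concrete2
section Concrete3
set_option linter.unusedSectionVars false
set_option maxHeartbeats 1000000
set_option linter.unusedTactic false

/-- Rotation of `Fin (m+2)` by one step. -/
def rotE (m : ℕ) : Fin (m+2) ≃ Fin (m+2) where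
  toFun i := ⟨if (i:ℕ) = m+1 then 0 else (i:ℕ)+1, by have := i.isLt; split_ifs <;> omega⟩
  invFun i := ⟨if (i:ℕ) = 0 then m+1 else (i:ℕ)-1, by have := i.isLt; split_ifs <;> omega⟩
  left_inv i := by
    have := i.isLt
    simp only [Fin.ext_iff, Fin.val_mk]
    split_ifs <;> (try contradiction) <;> omega
  right_inv i := by
    have := i.isLt
    simp only [Fin.ext_iff, Fin.val_mk]
    split_ifs <;> omega

lemma csf_A_eq_A' (m l : ℕ) :
    csf (addEdge (CP (m+2) (l+1)) (Sum.inr ⟨0, by omega⟩) (Sum.inl ⟨0, by omega⟩))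
      = csf (addEdge (CP (m+2) (l+1)) (Sum.inr ⟨0, by omega⟩) (Sum.inl ⟨1, by omega⟩)) := by
  apply csf_congr _ _ (Equiv.sumCongr (rotE m) (Equiv.refl (Fin (l+1))))
  have key : ∀ i j : Fin (m+2), ((i:ℕ)+1) % (m+2) = (j:ℕ) ↔
      ((i:ℕ)+1 = j ∨ ((i:ℕ)+1 = m+2 ∧ (j:ℕ) = 0)) :=
    fun i j => mod_succ_eq_iff i.isLt j.isLt
  intro x y
  rcases x with i | i <;> rcases y with j | j <;>
    simp only [Equiv.sumCongr_apply, Sum.map_inl, Sum.map_inr, Equiv.refl_apply,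
      addEdge_adj, sumGraph_adj_inl_inl, sumGraph_adj_inr_inr, sumGraph_adj_inl_inr,
      sumGraph_adj_inr_inl, cycleG, pathG, SimpleGraph.fromRel_adj, Sum.inl.injEq,
      Sum.inr.injEq, reduceCtorEq, Fin.ext_iff, Fin.val_mk, ne_eq, key, false_or, or_false,
      false_and, and_false, not_false_eq_true, true_and, and_true] <;>
    (try (simp only [rotE, Equiv.coe_fn_mk, Fin.val_mk])) <;>
    (try split_ifs) <;> (try contradiction) <;>
    (try (simp only [not_false_eq_true, false_or, or_false, and_false, false_and, true_and,
      and_true, iff_false, false_iff, iff_true, true_iff, not_and, not_or, not_not])) <;>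
    (try trivial) <;> (try omega)

end Concrete3
section Concrete4
set_option linter.unusedSectionVars false
set_option linter.unusedTactic false
set_option maxHeartbeats 1000000

lemma csf_lineTadpole_zero (M : ℕ) : csf (lineTadpole M 0) = csf (cycleG M) := by
  apply csf_congr _ _ (Equiv.sumEmpty (Fin M) (Fin 0))
  rintro (i | i) (j | j)
  · simp only [Equiv.sumEmpty_apply_inl, lineTadpole, cycleG, SimpleGraph.fromRel_adj,
      Sum.inl.injEq, ne_eq]
  · exact j.elim0
  · exact i.elim0
  · exact i.elim0

lemma csf_tadpole_zero (M : ℕ) : csf (tadpole M 0) = csf (cycleG M) := by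
  apply csf_congr _ _ (Equiv.sumEmpty (Fin M) (Fin 0))
  rintro (i | i) (j | j)
  · simp only [Equiv.sumEmpty_apply_inl, tadpole, cycleG, SimpleGraph.fromRel_adj,
      Sum.inl.injEq, ne_eq]
  · exact j.elim0
  · exact i.elim0
  · exact i.elim0

end Concrete4
section Concrete5
set_option linter.unusedSectionVars false
set_option linter.unusedTactic false
set_option maxHeartbeats 1000000

/-- The vertex bijection exhibiting `Pb m l` as a path on `m+l+3` vertices. -/
def pbEquiv (m l : ℕ) : (Fin (m+2) ⊕ Fin (l+1)) ≃ Fin (m+2+(l+1)) where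
  toFun x := match x with
    | Sum.inl i => ⟨if (i:ℕ) = 0 then 0 else m+2-(i:ℕ), by have := i.isLt; split_ifs <;> omega⟩
    | Sum.inr j => ⟨m+2+(j:ℕ), by have := j.isLt; omega⟩
  invFun k := if h0 : (k:ℕ) = 0 then Sum.inl ⟨0, by omega⟩
    else if h2 : (k:ℕ) ≤ m+1 then Sum.inl ⟨m+2-(k:ℕ), by omega⟩
    else Sum.inr ⟨(k:ℕ)-(m+2), by have := k.isLt; omega⟩
  left_inv x := by
    rcases x with i | j
    · have hi := i.isLt
      by_cases h0 : (i:ℕ) = 0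
      · simp [h0, Fin.ext_iff] <;> omega
      · have c1 : ¬(m + 2 - (i:ℕ) = 0) := by omega
        have c2 : m + 2 - (i:ℕ) ≤ m + 1 := by omega
        simp [h0, c1, c2, Fin.ext_iff] <;> omega
    · have hj := j.isLt
      have c1 : ¬(m + 2 + (j:ℕ) = 0) := by omega
      have c2 : ¬(m + 2 + (j:ℕ) ≤ m + 1) := by omega
      simp only [dif_neg c1, dif_neg c2, Sum.inr.injEq, Fin.ext_iff, Fin.val_mk] <;> omega
  right_inv k := by
    have hk := k.isLt
    by_cases h0 : (k:ℕ) = 0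
    · simp [h0, Fin.ext_iff] <;> omega
    · by_cases h2 : (k:ℕ) ≤ m+1
      · have c1 : ¬(m + 2 - (k:ℕ) = 0) := by omega
        simp [h0, h2, c1, Fin.ext_iff] <;> omega
      · have c1 : ¬((k:ℕ) - (m+2) + (m+2) = 0) := by omega
        simp [h0, h2, c1, Fin.ext_iff] <;> omega

lemma csf_Pb (m l : ℕ) : csf (Pb m l) = csf (pathG (m+2+(l+1))) := by
  apply csf_congr _ _ (pbEquiv m l)
  have key : ∀ i j : Fin (m+2), ((i:ℕ)+1) % (m+2) = (j:ℕ) ↔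
      ((i:ℕ)+1 = j ∨ ((i:ℕ)+1 = m+2 ∧ (j:ℕ) = 0)) :=
    fun i j => mod_succ_eq_iff i.isLt j.isLt
  intro x y
  rcases x with i | i <;> rcases y with j | j <;>
    (try (have hi := i.isLt)) <;> (try (have hj := j.isLt)) <;>
    simp only [pbEquiv, Equiv.coe_fn_mk, Pb, pathG, SimpleGraph.fromRel_adj, Sum.inl.injEq,
      Sum.inr.injEq, reduceCtorEq, Fin.ext_iff, Fin.val_mk, ne_eq, key, false_or, or_false,
      false_and, and_false, not_false_eq_true, true_and, and_true] <;>
    (try split_ifs) <;> (try contradiction) <;>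
    (try (simp only [not_false_eq_true, false_or, or_false, and_false, false_and, true_and,
      and_true, iff_false, false_iff, iff_true, true_iff, not_and, not_or, not_not])) <;>
    (try trivial) <;> (try omega)

/-- The vertex bijection exhibiting `Pb + v₀w₀` as the tadpole `Tp_{m+3,l}`. -/
def tpEquiv (m l : ℕ) : (Fin (m+2) ⊕ Fin (l+1)) ≃ (Fin (m+3) ⊕ Fin l) where
  toFun x := match x with
    | Sum.inl i => Sum.inl ⟨if (i:ℕ) = 0 then m+2 else (i:ℕ), by have := i.isLt; split_ifs <;> omega⟩
    | Sum.inr j => if h : (j:ℕ) = 0 then Sum.inl ⟨0, by omega⟩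
        else Sum.inr ⟨(j:ℕ)-1, by have := j.isLt; omega⟩
  invFun x := match x with
    | Sum.inl k => if h0 : (k:ℕ) = 0 then Sum.inr ⟨0, by omega⟩
        else if h2 : (k:ℕ) = m+2 then Sum.inl ⟨0, by omega⟩
        else Sum.inl ⟨(k:ℕ), by have := k.isLt; omega⟩
    | Sum.inr j => Sum.inr ⟨(j:ℕ)+1, by have := j.isLt; omega⟩
  left_inv x := by
    rcases x with i | j
    · have hi := i.isLt
      by_cases h0 : (i:ℕ) = 0
      · simp [h0, Fin.ext_iff] <;> omega
      · have c1 : ¬((i:ℕ) = m + 2) := by omega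
        simp [h0, c1, Fin.ext_iff] <;> omega
    · have hj := j.isLt
      by_cases h0 : (j:ℕ) = 0
      · simp [h0, Fin.ext_iff] <;> omega
      · simp [h0, Fin.ext_iff] <;> omega
  right_inv x := by
    rcases x with k | j
    · have hk := k.isLt
      by_cases h0 : (k:ℕ) = 0
      · simp [h0, Fin.ext_iff] <;> omega
      · by_cases h2 : (k:ℕ) = m+2
        · simp [h0, h2, Fin.ext_iff] <;> omega
        · simp [h0, h2, Fin.ext_iff] <;> omega
    · have hj := j.isLt
      simp [Fin.ext_iff] <;> omega

lemma csf_A2 (m l : ℕ) :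
    csf (addEdge (Pb m l) (Sum.inl ⟨0, by omega⟩) (Sum.inr ⟨0, by omega⟩))
      = csf (tadpole (m+3) l) := by
  apply csf_congr _ _ (tpEquiv m l)
  have key : ∀ i j : Fin (m+2), ((i:ℕ)+1) % (m+2) = (j:ℕ) ↔
      ((i:ℕ)+1 = j ∨ ((i:ℕ)+1 = m+2 ∧ (j:ℕ) = 0)) :=
    fun i j => mod_succ_eq_iff i.isLt j.isLt
  have key3 : ∀ i j : Fin (m+3), ((i:ℕ)+1) % (m+3) = (j:ℕ) ↔
      ((i:ℕ)+1 = j ∨ ((i:ℕ)+1 = m+3 ∧ (j:ℕ) = 0)) :=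
    fun i j => mod_succ_eq_iff i.isLt j.isLt
  intro x y
  rcases x with i | i <;> rcases y with j | j
  · have hi := i.isLt
    have hj := j.isLt
    by_cases h0 : (i:ℕ) = 0 <;> by_cases h1 : (j:ℕ) = 0 <;>
      simp only [tpEquiv, Equiv.coe_fn_mk, addEdge_adj, Pb, tadpole, SimpleGraph.fromRel_adj,
        Sum.inl.injEq, Sum.inr.injEq, reduceCtorEq, Fin.ext_iff, Fin.val_mk, ne_eq, key, key3,
        h0, h1, if_true, if_false, false_or, or_false, false_and, and_false,
        not_false_eq_true, true_and, and_true, or_true, true_or, iff_true, true_iff,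
        iff_false, false_iff] <;>
      (try split_ifs) <;>
      (try (simp only [not_false_eq_true, not_true, not_and, not_or, not_not, false_or, or_false,
        false_and, and_false, true_and, and_true, or_true, true_or])) <;>
      (try trivial) <;> (try omega)
  · have hi := i.isLt
    have hj := j.isLt
    by_cases h0 : (i:ℕ) = 0 <;> by_cases h1 : (j:ℕ) = 0 <;>
      simp only [tpEquiv, Equiv.coe_fn_mk, addEdge_adj, Pb, tadpole, SimpleGraph.fromRel_adj,
        Sum.inl.injEq, Sum.inr.injEq, reduceCtorEq, Fin.ext_iff, Fin.val_mk, ne_eq, key, key3,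
        h0, h1, dif_pos, dif_neg, if_true, if_false, false_or, or_false, false_and, and_false,
        not_false_eq_true, true_and, and_true, or_true, true_or, iff_true, true_iff,
        iff_false, false_iff] <;>
      (try split_ifs) <;>
      (try (simp only [Sum.inl.injEq, Sum.inr.injEq, reduceCtorEq, Fin.ext_iff, Fin.val_mk,
        not_false_eq_true, not_true, not_and, not_or, not_not, false_or, or_false,
        false_and, and_false, true_and, and_true, or_true, true_or, key3])) <;>
      (try trivial) <;> (try omega)
  · have hi := i.isLt
    have hj := j.isLt
    by_cases h0 : (i:ℕ) = 0 <;> by_cases h1 : (j:ℕ) = 0 <;>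
      simp only [tpEquiv, Equiv.coe_fn_mk, addEdge_adj, Pb, tadpole, SimpleGraph.fromRel_adj,
        Sum.inl.injEq, Sum.inr.injEq, reduceCtorEq, Fin.ext_iff, Fin.val_mk, ne_eq, key, key3,
        h0, h1, dif_pos, dif_neg, if_true, if_false, false_or, or_false, false_and, and_false,
        not_false_eq_true, true_and, and_true, or_true, true_or, iff_true, true_iff,
        iff_false, false_iff] <;>
      (try split_ifs) <;>
      (try (simp only [Sum.inl.injEq, Sum.inr.injEq, reduceCtorEq, Fin.ext_iff, Fin.val_mk,
        not_false_eq_true, not_true, not_and, not_or, not_not, false_or, or_false,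
        false_and, and_false, true_and, and_true, or_true, true_or, key3])) <;>
      (try trivial) <;> (try omega)
  · have hi := i.isLt
    have hj := j.isLt
    by_cases h0 : (i:ℕ) = 0 <;> by_cases h1 : (j:ℕ) = 0 <;>
      simp only [tpEquiv, Equiv.coe_fn_mk, addEdge_adj, Pb, tadpole, SimpleGraph.fromRel_adj,
        Sum.inl.injEq, Sum.inr.injEq, reduceCtorEq, Fin.ext_iff, Fin.val_mk, ne_eq, key, key3,
        h0, h1, dif_pos, dif_neg, if_true, if_false, false_or, or_false, false_and, and_false,
        not_false_eq_true, true_and, and_true, or_true, true_or, iff_true, true_iff,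
        iff_false, false_iff] <;>
      (try split_ifs) <;>
      (try (simp only [Sum.inl.injEq, Sum.inr.injEq, reduceCtorEq, Fin.ext_iff, Fin.val_mk,
        not_false_eq_true, not_true, not_and, not_or, not_not, false_or, or_false,
        false_and, and_false, true_and, and_true, or_true, true_or, key3])) <;>
      (try trivial) <;> (try omega)

end Concrete5
section MainLemmas
set_option linter.unusedSectionVars false
set_option linter.unusedTactic false
set_option maxHeartbeats 1000000

lemma TT_succ (m l : ℕ) :
    2 * csf (tadpole (m+2) (l+1))
      = csf (lineTadpole (m+2) (l+1)) + csf (pathG (l+1)) * csf (cycleG (m+2)) := by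
  have hadj : (CP (m+2) (l+1)).Adj (Sum.inl ⟨0, by omega⟩) (Sum.inl ⟨1, by omega⟩) := by
    rw [sumGraph_adj_inl_inl]
    refine ⟨?_, Or.inl ?_⟩
    · simp [Fin.ext_iff]
    · show (0 + 1) % (m+2) = 1
      rw [Nat.mod_eq_of_lt (by omega)]
  have h := csf_tripleDeletion (CP (m+2) (l+1)) (Sum.inl ⟨0, by omega⟩) (Sum.inl ⟨1, by omega⟩)
    (Sum.inr ⟨0, by omega⟩) hadj (by simp) (by simp)
  rw [graph_B, ← csf_A_eq_A', graph_A, csf_sumGraph] at h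
  linear_combination -h

lemma TT_all (M L : ℕ) (hM : 2 ≤ M) :
    2 * csf (tadpole M L) = csf (lineTadpole M L) + csf (pathG L) * csf (cycleG M) := by
  obtain ⟨m, rfl⟩ : ∃ m, M = m + 2 := ⟨M - 2, by omega⟩
  cases L with
  | zero =>
      rw [csf_tadpole_zero, csf_lineTadpole_zero, csf_pathG_zero, one_mul, two_mul]
  | succ l => exact TT_succ m l

lemma REC (m l : ℕ) :
    csf (lineTadpole (m+2) (l+1)) + csf (pathG (m+2+(l+1)))
      = csf (tadpole (m+3) l) + csf (tadpole (m+2) (l+1)) := by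
  have hadj : (Pb m l).Adj (Sum.inr ⟨0, by omega⟩) (Sum.inl ⟨1, by omega⟩) := by
    rw [Pb, SimpleGraph.fromRel_adj]
    exact ⟨by simp, Or.inr ⟨rfl, rfl⟩⟩
  have h := csf_tripleDeletion (Pb m l) (Sum.inr ⟨0, by omega⟩) (Sum.inl ⟨1, by omega⟩)
    (Sum.inl ⟨0, by omega⟩) hadj (by simp) (by simp [Fin.ext_iff])
  rw [graph_B2, csf_Pb, csf_A2, graph_A3, ← csf_A_eq_A', graph_A] at h
  linear_combination h

lemma sum_Icc_one (n : ℕ) (f : ℕ → SymFun) :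
    ∑ k ∈ Finset.Icc 1 n, f k = ∑ k ∈ Finset.range n, f (k+1) := by
  induction n with
  | zero => simp
  | succ n ih =>
      rw [Finset.sum_Icc_succ_top (by omega), ih, Finset.sum_range_succ]

end MainLemmas
-- STATEMENT 2
theorem lineTadpole_csf_formula (m l : ℕ) (hm : 2 ≤ m) :
    csf (lineTadpole m l) =
      csf (pathG l) * csf (cycleG m) +
        2 * ∑ k ∈ Finset.Icc 1 l, csf (pathG (l - k)) * csf (cycleG (m + k)) -
        ((2 * l : ℕ) : SymFun) * csf (pathG (m + l)) := by
  induction l generalizing m hm with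
  | zero =>
      rw [csf_lineTadpole_zero, csf_pathG_zero, one_mul,
        Finset.Icc_eq_empty (by omega), Finset.sum_empty, mul_zero, add_zero]
      push_cast
      ring
  | succ l IH =>
      obtain ⟨m', rfl⟩ : ∃ m', m = m' + 2 := ⟨m - 2, by omega⟩
      have e1 := REC m' l
      have e2 := TT_succ m' l
      have e3 := TT_all (m' + 3) l (by omega)
      have hIH := IH (m' + 3) (by omega)
      have hidx : m' + 3 + l = m' + 2 + (l + 1) := by omega
      rw [hidx] at hIH
      rw [sum_Icc_one] at hIH
      rw [sum_Icc_one]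
      have hsum : (∑ k ∈ Finset.range (l + 1),
            csf (pathG (l + 1 - (k + 1))) * csf (cycleG (m' + 2 + (k + 1))))
          = (∑ k ∈ Finset.range l, csf (pathG (l - (k + 1))) * csf (cycleG (m' + 3 + (k + 1))))
            + csf (pathG l) * csf (cycleG (m' + 3)) := by
        rw [Finset.sum_range_succ']
        have h1 : l + 1 - (0 + 1) = l := by omega
        have h2 : m' + 2 + (0 + 1) = m' + 3 := by omega
        rw [h1, h2]
        congr 1
        apply Finset.sum_congr rfl
        intro k hk
        have h3 : l + 1 - (k + 1 + 1) = l - (k + 1) := by omega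
        have h4 : m' + 2 + (k + 1 + 1) = m' + 3 + (k + 1) := by omega
        rw [h3, h4]
      have hc : ((2 * (l + 1) : ℕ) : SymFun) = ((2 * l : ℕ) : SymFun) + 2 := by
        push_cast
        ring
      linear_combination 2 * e1 + e2 + e3 + hIH + (-2) * hsum
        + csf (pathG (m' + 2 + (l + 1))) * hc
end
end

section
/- For all integers m ≥ 2 and l ≥ 0, X_{L(Tp_{m,l})} = 2·X_{Tp_{m,l}} − X_{C_m}·X_{P_l}. -/
open Finset

noncomputable section

-- ======================= auxiliary material =======================

section CsfAux

/-- The size finsupp of a coloring. -/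
def szF {A : Type} [Fintype A] (f : A → ℕ) : ℕ →₀ ℕ :=
  Finsupp.ofSupportFinite (fun i => Nat.card {a : A // f a = i})
    (Set.Finite.subset (Set.finite_range f) (by
      intro i hi
      rw [Function.mem_support] at hi
      obtain ⟨⟨a, ha⟩, -⟩ := Nat.card_ne_zero.mp hi
      exact ⟨a, ha⟩))

lemma szF_apply {A : Type} [Fintype A] (f : A → ℕ) (i : ℕ) :
    szF f i = Nat.card {a : A // f a = i} :=
  congrFun (Finsupp.ofSupportFinite_coe) i

lemma card_subtype_sum {A B : Type} [Finite A] [Finite B] (P : A ⊕ B → Prop) :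
    Nat.card {x : A ⊕ B // P x}
      = Nat.card {a : A // P (Sum.inl a)} + Nat.card {b : B // P (Sum.inr b)} := by
  rw [← Nat.card_sum]
  exact Nat.card_congr ⟨fun x => match x with
    | ⟨.inl a, h⟩ => .inl ⟨a, h⟩
    | ⟨.inr b, h⟩ => .inr ⟨b, h⟩,
    fun y => match y with
    | .inl ⟨a, h⟩ => ⟨.inl a, h⟩
    | .inr ⟨b, h⟩ => ⟨.inr b, h⟩,
    by rintro ⟨a | b, h⟩ <;> rfl,
    by rintro (⟨a, h⟩ | ⟨b, h⟩) <;> rfl⟩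

lemma nat_card_sigma' {ι : Type} [Fintype ι] {f : ι → Type} [∀ i, Finite (f i)] :
    Nat.card (Sigma f) = ∑ i, Nat.card (f i) := by
  classical
  haveI := fun i => Fintype.ofFinite (f i)
  simp only [Nat.card_eq_fintype_card, Fintype.card_sigma]

lemma sizes_finite {V : Type} [Fintype V] (d : ℕ →₀ ℕ) :
    {κ : V → ℕ | ∀ i : ℕ, Nat.card {v : V // κ v = i} = d i}.Finite := by
  classical
  apply Set.Finite.subset (Set.Finite.pi (fun _ : V => d.support.finite_toSet))
  intro κ hκ
  rw [Set.mem_pi]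
  intro v _
  have hne : Nonempty {w : V // κ w = κ v} := ⟨⟨v, rfl⟩⟩
  have h0 : Nat.card {w : V // κ w = κ v} ≠ 0 := Nat.card_pos.ne'
  simp only [Finset.mem_coe, Finsupp.mem_support_iff]
  rw [← hκ (κ v)]
  exact h0

abbrev SzP {V : Type} (d : ℕ →₀ ℕ) (κ : V → ℕ) : Prop :=
  ∀ i : ℕ, Nat.card {v : V // κ v = i} = d i

lemma subtype_finite {V : Type} [Fintype V] (d : ℕ →₀ ℕ) (P : (V → ℕ) → Prop) :
    Finite {κ : V → ℕ // P κ ∧ SzP d κ} := by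
  have h : {κ : V → ℕ | P κ ∧ SzP d κ}.Finite :=
    (sizes_finite d).subset (fun κ h => h.2)
  exact h.to_subtype

section Preds
variable (n l : ℕ)
abbrev CycP (κ : Fin (n+2) ⊕ Fin l → ℕ) : Prop :=
  ∀ i j : Fin (n+2), i + 1 = j → κ (Sum.inl i) ≠ κ (Sum.inl j)
abbrev PthP (κ : Fin (n+2) ⊕ Fin l → ℕ) : Prop :=
  ∀ i j : Fin l, (i:ℕ) + 1 = (j:ℕ) → κ (Sum.inr i) ≠ κ (Sum.inr j)
abbrev UP (κ : Fin (n+2) ⊕ Fin l → ℕ) : Prop :=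
  ∀ j : Fin l, (j:ℕ) = 0 → κ (Sum.inl 0) ≠ κ (Sum.inr j)
abbrev VP (κ : Fin (n+2) ⊕ Fin l → ℕ) : Prop :=
  ∀ j : Fin l, (j:ℕ) = 0 → κ (Sum.inl 1) ≠ κ (Sum.inr j)
abbrev CycQ (κ : Fin (n+2) → ℕ) : Prop := ∀ i j : Fin (n+2), i + 1 = j → κ i ≠ κ j
abbrev PthQ (κ : Fin l → ℕ) : Prop := ∀ i j : Fin l, (i:ℕ) + 1 = (j:ℕ) → κ i ≠ κ j
end Preds

variable {n l : ℕ}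

lemma fin_mod_iff (i j : Fin (n+2)) : ((i:ℕ)+1) % (n+2) = (j:ℕ) ↔ i + 1 = j := by
  rw [Fin.ext_iff, Fin.add_def, Fin.val_one]

lemma ne_of_fin_succ {i j : Fin (n+2)} (hij : i + 1 = j) : i ≠ j := by
  rintro rfl
  exact one_ne_zero (add_eq_left.mp hij)

lemma tadpole_proper_iff (κ : Fin (n+2) ⊕ Fin l → ℕ) :
    (∀ v w, (tadpole (n+2) l).Adj v w → κ v ≠ κ w) ↔ CycP n l κ ∧ PthP n l κ ∧ UP n l κ := by
  constructor
  · intro H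
    refine ⟨fun i j hij => H _ _ ?_, fun i j hij => H _ _ ?_, fun j hj => H _ _ ?_⟩ <;>
      rw [tadpole, SimpleGraph.fromRel_adj]
    · exact ⟨by simpa using ne_of_fin_succ hij, Or.inl ((fin_mod_iff i j).mpr hij)⟩
    · exact ⟨by simp only [ne_eq, Sum.inr.injEq]; rintro rfl; omega, Or.inl hij⟩
    · exact ⟨by simp, Or.inl ⟨by simp, hj⟩⟩
  · rintro ⟨hc, hp, hu⟩ v w hadj
    rw [tadpole, SimpleGraph.fromRel_adj] at hadj
    obtain ⟨hne, h | h⟩ := hadj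
    · rcases v with i | i <;> rcases w with j | j
      · exact hc i j ((fin_mod_iff i j).mp h)
      · have hi : i = 0 := Fin.ext (by simpa using h.1)
        rw [hi]; exact hu j h.2
      · exact h.elim
      · exact hp i j h
    · rcases v with i | i <;> rcases w with j | j
      · exact (hc j i ((fin_mod_iff j i).mp h)).symm
      · exact h.elim
      · have hj : j = 0 := Fin.ext (by simpa using h.1)
        rw [hj]; exact (hu i h.2).symm
      · exact (hp j i h).symm

lemma lineTadpole_proper_iff (κ : Fin (n+2) ⊕ Fin l → ℕ) :
    (∀ v w, (lineTadpole (n+2) l).Adj v w → κ v ≠ κ w) ↔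
      CycP n l κ ∧ PthP n l κ ∧ UP n l κ ∧ VP n l κ := by
  constructor
  · intro H
    refine ⟨fun i j hij => H _ _ ?_, fun i j hij => H _ _ ?_,
      fun j hj => H _ _ ?_, fun j hj => H _ _ ?_⟩ <;>
      rw [lineTadpole, SimpleGraph.fromRel_adj]
    · exact ⟨by simpa using ne_of_fin_succ hij, Or.inl ((fin_mod_iff i j).mpr hij)⟩
    · exact ⟨by simp only [ne_eq, Sum.inr.injEq]; rintro rfl; omega, Or.inl hij⟩
    · exact ⟨by simp, Or.inl ⟨Or.inl (by simp), hj⟩⟩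
    · exact ⟨by simp, Or.inl ⟨Or.inr (by simp), hj⟩⟩
  · rintro ⟨hc, hp, hu, hv⟩ v w hadj
    rw [lineTadpole, SimpleGraph.fromRel_adj] at hadj
    obtain ⟨hne, h | h⟩ := hadj
    · rcases v with i | i <;> rcases w with j | j
      · exact hc i j ((fin_mod_iff i j).mp h)
      · rcases h.1 with h1 | h1
        · have hi : i = 0 := Fin.ext (by simpa using h1)
          rw [hi]; exact hu j h.2
        · have hi : i = 1 := Fin.ext (by simpa using h1)
          rw [hi]; exact hv j h.2
      · exact h.elim
      · exact hp i j h
    · rcases v with i | i <;> rcases w with j | j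
      · exact (hc j i ((fin_mod_iff j i).mp h)).symm
      · exact h.elim
      · rcases h.1 with h1 | h1
        · have hj : j = 0 := Fin.ext (by simpa using h1)
          rw [hj]; exact (hu i h.2).symm
        · have hj : j = 1 := Fin.ext (by simpa using h1)
          rw [hj]; exact (hv i h.2).symm
      · exact (hp j i h).symm

lemma cycle_proper_iff (κ : Fin (n+2) → ℕ) :
    (∀ v w, (cycleG (n+2)).Adj v w → κ v ≠ κ w) ↔ CycQ n κ := by
  constructor
  · intro H i j hij
    exact H _ _ (by
      rw [cycleG, SimpleGraph.fromRel_adj]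
      exact ⟨ne_of_fin_succ hij, Or.inl ((fin_mod_iff i j).mpr hij)⟩)
  · intro hc v w hadj
    rw [cycleG, SimpleGraph.fromRel_adj] at hadj
    obtain ⟨hne, h | h⟩ := hadj
    · exact hc v w ((fin_mod_iff v w).mp h)
    · exact (hc w v ((fin_mod_iff w v).mp h)).symm

lemma path_proper_iff (κ : Fin l → ℕ) :
    (∀ v w, (pathG l).Adj v w → κ v ≠ κ w) ↔ PthQ l κ := by
  constructor
  · intro H i j hij
    exact H _ _ (by
      rw [pathG, SimpleGraph.fromRel_adj]
      exact ⟨by simp only [ne_eq, Fin.ext_iff]; omega, Or.inl hij⟩)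
  · intro hc v w hadj
    rw [pathG, SimpleGraph.fromRel_adj] at hadj
    obtain ⟨hne, h | h⟩ := hadj
    · exact hc v w h
    · exact (hc w v h).symm

def refl2 (n l : ℕ) : (Fin (n+2) ⊕ Fin l) ≃ (Fin (n+2) ⊕ Fin l) :=
  Equiv.sumCongr (Equiv.subLeft 1) (Equiv.refl _)

lemma refl2_invol (v : Fin (n+2) ⊕ Fin l) : refl2 n l (refl2 n l v) = v := by
  cases v <;> simp [refl2, sub_sub_cancel]

lemma refl2_cyc {κ : Fin (n+2) ⊕ Fin l → ℕ} (hc : CycP n l κ) :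
    CycP n l (fun v => κ (refl2 n l v)) := by
  intro i j hij
  simp only [refl2, Equiv.sumCongr_apply, Sum.map_inl, Equiv.subLeft_apply]
  exact (hc (1-j) (1-i) (by rw [← hij, sub_add_eq_sub_sub, sub_add_cancel])).symm

lemma refl2_pth {κ : Fin (n+2) ⊕ Fin l → ℕ} (hp : PthP n l κ) :
    PthP n l (fun v => κ (refl2 n l v)) := by
  intro i j hij
  simpa only [refl2, Equiv.sumCongr_apply, Sum.map_inr, Equiv.refl_apply] using hp i j hij

lemma refl2_uv {κ : Fin (n+2) ⊕ Fin l → ℕ} (hv : VP n l κ) :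
    UP n l (fun v => κ (refl2 n l v)) := by
  intro j hj
  simp only [refl2, Equiv.sumCongr_apply, Sum.map_inl, Sum.map_inr, Equiv.subLeft_apply,
    Equiv.refl_apply, sub_zero]
  exact hv j hj

lemma refl2_vu {κ : Fin (n+2) ⊕ Fin l → ℕ} (hu : UP n l κ) :
    VP n l (fun v => κ (refl2 n l v)) := by
  intro j hj
  simp only [refl2, Equiv.sumCongr_apply, Sum.map_inl, Sum.map_inr, Equiv.subLeft_apply,
    Equiv.refl_apply, sub_self]
  exact hu j hj

lemma refl2_sz {κ : Fin (n+2) ⊕ Fin l → ℕ} {d : ℕ →₀ ℕ} (hs : SzP d κ) :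
    SzP d (fun v => κ (refl2 n l v)) := by
  intro i
  rw [← hs i]
  exact Nat.card_congr (Equiv.subtypeEquiv (refl2 n l) (fun v => Iff.rfl))

lemma card_reflect (d : ℕ →₀ ℕ) :
    Nat.card {κ : Fin (n+2) ⊕ Fin l → ℕ // (CycP n l κ ∧ PthP n l κ ∧ VP n l κ) ∧ SzP d κ}
      = Nat.card {κ : Fin (n+2) ⊕ Fin l → ℕ // (CycP n l κ ∧ PthP n l κ ∧ UP n l κ) ∧ SzP d κ} := by
  apply Nat.card_congr
  refine ⟨fun x => ⟨fun v => x.1 (refl2 n l v),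
      ⟨⟨refl2_cyc x.2.1.1, refl2_pth x.2.1.2.1, refl2_uv x.2.1.2.2⟩, refl2_sz x.2.2⟩⟩,
    fun x => ⟨fun v => x.1 (refl2 n l v),
      ⟨⟨refl2_cyc x.2.1.1, refl2_pth x.2.1.2.1, refl2_vu x.2.1.2.2⟩, refl2_sz x.2.2⟩⟩,
    ?_, ?_⟩ <;>
  · intro x
    apply Subtype.ext
    funext v
    exact congrArg x.1 (refl2_invol v)

def splitT (d : ℕ →₀ ℕ)
    (x : {κ : Fin (n+2) ⊕ Fin l → ℕ // (CycP n l κ ∧ PthP n l κ) ∧ SzP d κ}) :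
    ↥(antidiagonal d) :=
  ⟨(szF (fun a => x.1 (Sum.inl a)), szF (fun b => x.1 (Sum.inr b))), by
    rw [Finset.HasAntidiagonal.mem_antidiagonal]
    ext i
    rw [Finsupp.add_apply, szF_apply, szF_apply, ← x.2.2 i, card_subtype_sum]⟩

lemma card_prod_split (d : ℕ →₀ ℕ) :
    (Nat.card {κ : Fin (n+2) ⊕ Fin l → ℕ // (CycP n l κ ∧ PthP n l κ) ∧ SzP d κ} : ℚ)
      = ∑ p ∈ antidiagonal d,
          (Nat.card {κ : Fin (n+2) → ℕ // CycQ n κ ∧ SzP p.1 κ} : ℚ)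
            * (Nat.card {κ : Fin l → ℕ // PthQ l κ ∧ SzP p.2 κ} : ℚ) := by
  classical
  haveI : Finite {κ : Fin (n+2) ⊕ Fin l → ℕ // (CycP n l κ ∧ PthP n l κ) ∧ SzP d κ} :=
    subtype_finite d _
  have hfib : ∀ p : ↥(antidiagonal d),
      Nat.card {c : {κ : Fin (n+2) ⊕ Fin l → ℕ // (CycP n l κ ∧ PthP n l κ) ∧ SzP d κ} //
          splitT d c = p}
      = Nat.card {κ : Fin (n+2) → ℕ // CycQ n κ ∧ SzP p.1.1 κ}
        * Nat.card {κ : Fin l → ℕ // PthQ l κ ∧ SzP p.1.2 κ} := by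
    intro p
    rw [← Nat.card_prod]
    apply Nat.card_congr
    refine ⟨fun x => (⟨fun a => x.1.1 (Sum.inl a),
        ⟨fun i j hij => x.1.2.1.1 i j hij, fun i => by
          have h1 : (szF (fun a => x.1.1 (Sum.inl a))) = p.1.1 :=
            congrArg Prod.fst (Subtype.ext_iff.mp x.2)
          rw [← h1, szF_apply]⟩⟩,
      ⟨fun b => x.1.1 (Sum.inr b),
        ⟨fun i j hij => x.1.2.1.2 i j hij, fun i => by
          have h2 : (szF (fun b => x.1.1 (Sum.inr b))) = p.1.2 :=
            congrArg Prod.snd (Subtype.ext_iff.mp x.2)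
          rw [← h2, szF_apply]⟩⟩),
      fun y => ⟨⟨Sum.elim y.1.1 y.2.1,
        ⟨⟨fun i j hij => y.1.2.1 i j hij, fun i j hij => y.2.2.1 i j hij⟩, fun i => by
          rw [card_subtype_sum]
          have hp := Finset.HasAntidiagonal.mem_antidiagonal.mp p.2
          have e1 : Nat.card {a : Fin (n+2) // Sum.elim y.1.1 y.2.1 (Sum.inl a) = i}
              = p.1.1 i := y.1.2.2 i
          have e2 : Nat.card {b : Fin l // Sum.elim y.1.1 y.2.1 (Sum.inr b) = i}
              = p.1.2 i := y.2.2.2 i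
          rw [e1, e2, ← Finsupp.add_apply, hp]⟩⟩, by
        apply Subtype.ext
        have e1 : szF (fun a => Sum.elim y.1.1 y.2.1 (Sum.inl a)) = p.1.1 :=
          Finsupp.ext (fun i => by rw [szF_apply]; exact y.1.2.2 i)
        have e2 : szF (fun b => Sum.elim y.1.1 y.2.1 (Sum.inr b)) = p.1.2 :=
          Finsupp.ext (fun i => by rw [szF_apply]; exact y.2.2.2 i)
        exact Prod.ext e1 e2⟩,
      ?_, ?_⟩
    · intro x
      apply Subtype.ext
      apply Subtype.ext
      funext v
      cases v <;> rfl
    · intro y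
      refine Prod.ext (Subtype.ext ?_) (Subtype.ext ?_) <;> rfl
  have h1 : Nat.card {κ : Fin (n+2) ⊕ Fin l → ℕ // (CycP n l κ ∧ PthP n l κ) ∧ SzP d κ}
      = ∑ p ∈ antidiagonal d,
      Nat.card {κ : Fin (n+2) → ℕ // CycQ n κ ∧ SzP p.1 κ}
        * Nat.card {κ : Fin l → ℕ // PthQ l κ ∧ SzP p.2 κ} := by
    rw [← Nat.card_congr (Equiv.sigmaFiberEquiv (splitT (n := n) (l := l) d)),
      nat_card_sigma']
    rw [← Finset.sum_coe_sort (antidiagonal d)]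
    exact Finset.sum_congr rfl (fun p _ => hfib p)
  rw [h1]
  push_cast
  rfl

lemma key_ie (d : ℕ →₀ ℕ) :
    Nat.card {κ : Fin (n+2) ⊕ Fin l → ℕ //
        (CycP n l κ ∧ PthP n l κ ∧ UP n l κ ∧ VP n l κ) ∧ SzP d κ}
      + Nat.card {κ : Fin (n+2) ⊕ Fin l → ℕ // (CycP n l κ ∧ PthP n l κ) ∧ SzP d κ}
    = Nat.card {κ : Fin (n+2) ⊕ Fin l → ℕ // (CycP n l κ ∧ PthP n l κ ∧ UP n l κ) ∧ SzP d κ}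
      + Nat.card {κ : Fin (n+2) ⊕ Fin l → ℕ //
          (CycP n l κ ∧ PthP n l κ ∧ VP n l κ) ∧ SzP d κ} := by
  classical
  set P : Set (Fin (n+2) ⊕ Fin l → ℕ) :=
    {κ | (CycP n l κ ∧ PthP n l κ ∧ UP n l κ) ∧ SzP d κ} with hPdef
  set Q : Set (Fin (n+2) ⊕ Fin l → ℕ) :=
    {κ | (CycP n l κ ∧ PthP n l κ ∧ VP n l κ) ∧ SzP d κ} with hQdef
  have hPfin : P.Finite := (sizes_finite d).subset (fun κ h => h.2)
  have hQfin : Q.Finite := (sizes_finite d).subset (fun κ h => h.2)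
  have hPQ : P ∩ Q =
      {κ | (CycP n l κ ∧ PthP n l κ ∧ UP n l κ ∧ VP n l κ) ∧ SzP d κ} := by
    ext κ
    simp only [hPdef, hQdef, Set.mem_inter_iff, Set.mem_setOf_eq]
    tauto
  have hPuQ : P ∪ Q = {κ | (CycP n l κ ∧ PthP n l κ) ∧ SzP d κ} := by
    ext κ
    simp only [hPdef, hQdef, Set.mem_union, Set.mem_setOf_eq]
    constructor
    · rintro (⟨⟨hc, hp, -⟩, hs⟩ | ⟨⟨hc, hp, -⟩, hs⟩) <;> exact ⟨⟨hc, hp⟩, hs⟩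
    · rintro ⟨⟨hc, hp⟩, hs⟩
      by_cases hu : UP n l κ
      · exact Or.inl ⟨⟨hc, hp, hu⟩, hs⟩
      · refine Or.inr ⟨⟨hc, hp, ?_⟩, hs⟩
        obtain ⟨j₀, hj₀, he⟩ : ∃ j : Fin l, (j:ℕ) = 0 ∧ κ (Sum.inl 0) = κ (Sum.inr j) := by
          by_contra hno
          push_neg at hno
          exact hu fun j hj => hno j hj
        intro j hj
        have hjj : j = j₀ := Fin.ext (by rw [hj, hj₀])
        have h01 : κ (Sum.inl (0 : Fin (n+2))) ≠ κ (Sum.inl 1) := hc 0 1 (zero_add 1)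
        rw [hjj, ← he]
        exact h01.symm
  have c1 : Nat.card {κ : Fin (n+2) ⊕ Fin l → ℕ //
      (CycP n l κ ∧ PthP n l κ ∧ UP n l κ ∧ VP n l κ) ∧ SzP d κ} = (P ∩ Q).ncard := by
    rw [hPQ]
    exact Nat.card_coe_set_eq _
  have c2 : Nat.card {κ : Fin (n+2) ⊕ Fin l → ℕ //
      (CycP n l κ ∧ PthP n l κ) ∧ SzP d κ} = (P ∪ Q).ncard := by
    rw [hPuQ]
    exact Nat.card_coe_set_eq _
  have c3 : Nat.card {κ : Fin (n+2) ⊕ Fin l → ℕ //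
      (CycP n l κ ∧ PthP n l κ ∧ UP n l κ) ∧ SzP d κ} = P.ncard :=
    Nat.card_coe_set_eq _
  have c4 : Nat.card {κ : Fin (n+2) ⊕ Fin l → ℕ //
      (CycP n l κ ∧ PthP n l κ ∧ VP n l κ) ∧ SzP d κ} = Q.ncard :=
    Nat.card_coe_set_eq _
  rw [c1, c2, c3, c4]
  exact Set.ncard_inter_add_ncard_union P Q hPfin hQfin

end CsfAux

-- STATEMENT 3
theorem lineTadpole_csf_tadpole (m l : ℕ) (hm : 2 ≤ m) :
    csf (lineTadpole m l) = 2 * csf (tadpole m l) - csf (cycleG m) * csf (pathG l) := by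
  obtain ⟨n, rfl⟩ : ∃ n, m = n + 2 := ⟨m - 2, by omega⟩
  classical
  apply MvPowerSeries.ext
  intro d
  rw [two_mul, map_sub, map_add, MvPowerSeries.coeff_mul]
  simp only [MvPowerSeries.coeff_apply]
  have hLT : csf (lineTadpole (n+2) l) d
      = (Nat.card {κ : Fin (n+2) ⊕ Fin l → ℕ //
          (CycP n l κ ∧ PthP n l κ ∧ UP n l κ ∧ VP n l κ) ∧ SzP d κ} : ℚ) := by
    unfold csf
    norm_cast
    exact Nat.card_congr (Equiv.subtypeEquivRight fun κ =>
      and_congr_left' (lineTadpole_proper_iff κ))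
  have hT : csf (tadpole (n+2) l) d
      = (Nat.card {κ : Fin (n+2) ⊕ Fin l → ℕ //
          (CycP n l κ ∧ PthP n l κ ∧ UP n l κ) ∧ SzP d κ} : ℚ) := by
    unfold csf
    norm_cast
    exact Nat.card_congr (Equiv.subtypeEquivRight fun κ =>
      and_congr_left' (tadpole_proper_iff κ))
  have hprod : ∑ p ∈ antidiagonal d, csf (cycleG (n+2)) p.1 * csf (pathG l) p.2
      = (Nat.card {κ : Fin (n+2) ⊕ Fin l → ℕ //
          (CycP n l κ ∧ PthP n l κ) ∧ SzP d κ} : ℚ) := by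
    rw [card_prod_split d]
    refine Finset.sum_congr rfl fun p _ => ?_
    congr 1
    · unfold csf
      norm_cast
      exact Nat.card_congr (Equiv.subtypeEquivRight fun κ =>
        and_congr_left' (cycle_proper_iff κ))
    · unfold csf
      norm_cast
      exact Nat.card_congr (Equiv.subtypeEquivRight fun κ =>
        and_congr_left' (path_proper_iff κ))
  rw [hLT, hT, hprod]
  have h1 := key_ie (n := n) (l := l) d
  have h2 := card_reflect (n := n) (l := l) d
  rw [h2] at h1
  have h1q := congrArg (fun k : ℕ => (k : ℚ)) h1
  push_cast at h1q
  linarith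

end
end

section
/- For every integer l ≥ 0, the chromatic symmetric functions of small tadpoles satisfy X_{Tp_{3,l}} = 2·X_{P_{l+3}} − X_{C_2}·X_{P_{l+1}} and X_{Tp_{2,l}} = X_{P_{l+2}}. -/
open Finset

noncomputable section

set_option linter.unusedSectionVars false
namespace TadpoleAux


def Cond {V : Type} (d : ℕ →₀ ℕ) (κ : V → ℕ) : Prop := ∀ i : ℕ, Nat.card {v : V // κ v = i} = d i
def Proper {V : Type} (G : SimpleGraph V) (κ : V → ℕ) : Prop := ∀ v w : V, G.Adj v w → κ v ≠ κ w

variable {V W : Type} [Fintype V] [Fintype W]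

lemma csf_coeff (G : SimpleGraph V) (d : ℕ →₀ ℕ) :
    MvPowerSeries.coeff d (csf G) = (Nat.card {κ : V → ℕ // Proper G κ ∧ Cond d κ} : ℚ) := rfl

lemma mem_support_of_cond {d : ℕ →₀ ℕ} {κ : V → ℕ} (h : Cond d κ) (v : V) :
    κ v ∈ d.support := by
  have h1 : Nat.card {w : V // κ w = κ v} ≠ 0 := by
    have : Nonempty {w : V // κ w = κ v} := ⟨⟨v, rfl⟩⟩
    exact Nat.card_pos.ne'
  rw [Finsupp.mem_support_iff, ← h (κ v)]
  exact h1

lemma cond_finite (P : (V → ℕ) → Prop) (d : ℕ →₀ ℕ) :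
    Finite {κ : V → ℕ // P κ ∧ Cond d κ} := by
  have : Finite (V → d.support) := by infer_instance
  refine Finite.of_injective
    (fun κ => (fun v => ⟨κ.1 v, mem_support_of_cond κ.2.2 v⟩ : V → d.support)) ?_
  intro a b hab
  apply Subtype.ext
  funext v
  exact congrArg Subtype.val (congrFun hab v)

lemma card_iff {α : Type} {P Q : α → Prop} (h : ∀ x, P x ↔ Q x) :
    Nat.card {x // P x} = Nat.card {x // Q x} :=
  Nat.card_congr (Equiv.subtypeEquivRight h)

lemma card_split {α : Type} (P Q : α → Prop) [Finite {x : α // P x}] :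
    Nat.card {x // P x} = Nat.card {x // P x ∧ Q x} + Nat.card {x // P x ∧ ¬ Q x} := by
  classical
  have e : {x // P x} ≃ {x // P x ∧ Q x} ⊕ {x // P x ∧ ¬ Q x} :=
    { toFun := fun x => if h : Q x.1 then Sum.inl ⟨x.1, x.2, h⟩ else Sum.inr ⟨x.1, x.2, h⟩
      invFun := Sum.elim (fun y => ⟨y.1, y.2.1⟩) (fun y => ⟨y.1, y.2.1⟩)
      left_inv := by intro x; by_cases h : Q x.1 <;> simp [h]
      right_inv := by rintro (⟨x, hx⟩ | ⟨x, hx⟩) <;> simp [hx.2] }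
  have f1 : Finite {x // P x ∧ Q x} :=
    Finite.of_injective (fun y => (⟨y.1, y.2.1⟩ : {x // P x}))
      (fun a b hab => Subtype.ext (by simpa using congrArg Subtype.val hab))
  have f2 : Finite {x // P x ∧ ¬ Q x} :=
    Finite.of_injective (fun y => (⟨y.1, y.2.1⟩ : {x // P x}))
      (fun a b hab => Subtype.ext (by simpa using congrArg Subtype.val hab))
  rw [Nat.card_congr e, Nat.card_sum]

lemma cond_relabel (e : V ≃ W) (κ : V → ℕ) (d : ℕ →₀ ℕ) :
    Cond d (κ ∘ e.symm) ↔ Cond d κ := by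
  have key : ∀ i, Nat.card {w : W // (κ ∘ e.symm) w = i} = Nat.card {v : V // κ v = i} :=
    fun i => Nat.card_congr (e.symm.subtypeEquiv fun w => Iff.rfl)
  constructor <;> intro h i
  · rw [← key i]; exact h i
  · rw [key i]; exact h i

lemma card_relabel (e : V ≃ W) (P : (V → ℕ) → Prop) (Q : (W → ℕ) → Prop)
    (h : ∀ κ : V → ℕ, P κ ↔ Q (κ ∘ e.symm)) (d : ℕ →₀ ℕ) :
    Nat.card {κ : V → ℕ // P κ ∧ Cond d κ} = Nat.card {κ : W → ℕ // Q κ ∧ Cond d κ} := by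
  apply Nat.card_congr
  refine (Equiv.arrowCongr e (Equiv.refl ℕ)).subtypeEquiv (fun κ => ?_)
  have harr : (Equiv.arrowCongr e (Equiv.refl ℕ)) κ = κ ∘ e.symm := rfl
  rw [harr]
  exact and_congr (h κ) (cond_relabel e κ d).symm

lemma proper_relabel {G : SimpleGraph V} {H : SimpleGraph W} (e : V ≃ W)
    (h : ∀ v w, G.Adj v w ↔ H.Adj (e v) (e w)) (κ : V → ℕ) :
    Proper G κ ↔ Proper H (κ ∘ e.symm) := by
  constructor
  · intro hp v w hadj
    have : G.Adj (e.symm v) (e.symm w) := by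
      rw [h]; simpa using hadj
    exact hp _ _ this
  · intro hp v w hadj hc
    refine hp (e v) (e w) ((h v w).1 hadj) ?_
    simpa using hc

lemma csf_relabel {G : SimpleGraph V} {H : SimpleGraph W} (e : V ≃ W)
    (h : ∀ v w, G.Adj v w ↔ H.Adj (e v) (e w)) : csf G = csf H := by
  ext d
  rw [csf_coeff, csf_coeff]
  rw [card_relabel e (Proper G) (Proper H) (proper_relabel e h) d]

lemma nat_card_sigma {ι : Type} [Fintype ι] (f : ι → Type) [∀ i, Finite (f i)] :
    Nat.card (Σ i, f i) = ∑ i, Nat.card (f i) := by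
  have : ∀ i, Fintype (f i) := fun i => Fintype.ofFinite _
  simp [Nat.card_eq_fintype_card, Fintype.card_sigma]

lemma card_fiber_sum (κ1 : V → ℕ) (κ2 : W → ℕ) (i : ℕ) :
    Nat.card {u : V ⊕ W // Sum.elim κ1 κ2 u = i}
      = Nat.card {v : V // κ1 v = i} + Nat.card {w : W // κ2 w = i} := by
  rw [Nat.card_congr (Equiv.subtypeSum (p := fun u : V ⊕ W => Sum.elim κ1 κ2 u = i)),
    Nat.card_sum]
  rfl

lemma proper_sum_iff (G : SimpleGraph V) (H : SimpleGraph W) (κ : V ⊕ W → ℕ) :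
    Proper (G.sum H) κ ↔ (Proper G (κ ∘ Sum.inl) ∧ Proper H (κ ∘ Sum.inr)) := by
  constructor
  · intro hp
    exact ⟨fun v w h => hp _ _ (by simpa [SimpleGraph.sum_adj] using h),
           fun v w h => hp _ _ (by simpa [SimpleGraph.sum_adj] using h)⟩
  · rintro ⟨h1, h2⟩ u v huv
    rcases u with u | u <;> rcases v with v | v <;>
      rw [SimpleGraph.sum_adj] at huv
    · exact h1 u v huv
    · exact huv.elim
    · exact huv.elim
    · exact h2 u v huv

lemma csf_sum (G : SimpleGraph V) (H : SimpleGraph W) : csf (G.sum H) = csf G * csf H := by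
  classical
  ext d
  rw [MvPowerSeries.coeff_mul, csf_coeff]
  have key : Nat.card {κ : V ⊕ W → ℕ // Proper (G.sum H) κ ∧ Cond d κ}
      = ∑ p ∈ antidiagonal d,
          Nat.card {κ1 : V → ℕ // Proper G κ1 ∧ Cond p.1 κ1} *
          Nat.card {κ2 : W → ℕ // Proper H κ2 ∧ Cond p.2 κ2} := by
    have pfP : ∀ s : (p : (antidiagonal d : Finset _)) ×
        ({κ1 : V → ℕ // Proper G κ1 ∧ Cond p.1.1 κ1} ×
         {κ2 : W → ℕ // Proper H κ2 ∧ Cond p.1.2 κ2}),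
        Proper (G.sum H) (Sum.elim s.2.1.1 s.2.2.1) ∧ Cond d (Sum.elim s.2.1.1 s.2.2.1) := by
      rintro ⟨⟨p, hp⟩, ⟨κ1, h1p, h1c⟩, ⟨κ2, h2p, h2c⟩⟩
      constructor
      · rw [proper_sum_iff]
        exact ⟨h1p, h2p⟩
      · intro i
        rw [card_fiber_sum, h1c i, h2c i, ← Finsupp.add_apply,
          Finset.HasAntidiagonal.mem_antidiagonal.mp hp]
    have hbij : Function.Bijective (fun s : (p : (antidiagonal d : Finset _)) ×
        ({κ1 : V → ℕ // Proper G κ1 ∧ Cond p.1.1 κ1} ×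
         {κ2 : W → ℕ // Proper H κ2 ∧ Cond p.1.2 κ2}) =>
        (⟨Sum.elim s.2.1.1 s.2.2.1, pfP s⟩ :
          {κ : V ⊕ W → ℕ // Proper (G.sum H) κ ∧ Cond d κ})) := by
      constructor
      · rintro ⟨⟨p, hp⟩, ⟨κ1, h1p, h1c⟩, ⟨κ2, h2p, h2c⟩⟩ ⟨⟨q, hq⟩, ⟨μ1, g1p, g1c⟩, ⟨μ2, g2p, g2c⟩⟩ h
        simp only [Subtype.mk.injEq] at h
        have e1 : κ1 = μ1 := funext fun v => congrFun h (Sum.inl v)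
        have e2 : κ2 = μ2 := funext fun w => congrFun h (Sum.inr w)
        subst e1; subst e2
        have hpq : p = q := by
          ext1
          · ext i; rw [← h1c i, ← g1c i]
          · ext i; rw [← h2c i, ← g2c i]
        subst hpq
        rfl
      · rintro ⟨κ, hp, hc⟩
        have helim : κ = Sum.elim (κ ∘ Sum.inl) (κ ∘ Sum.inr) := by
          funext u; rcases u with u | u <;> rfl
        have hsum : ∀ i, d i = Nat.card {v : V // κ (Sum.inl v) = i} +
            Nat.card {w : W // κ (Sum.inr w) = i} := by
          intro i
          rw [← hc i]
          conv_lhs => rw [helim]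
          exact card_fiber_sum _ _ i
        have hfin1 : (Function.support fun i => Nat.card {v : V // κ (Sum.inl v) = i}).Finite := by
          apply Set.Finite.subset d.finite_support
          intro i hi
          have hi' : Nat.card {v : V // κ (Sum.inl v) = i} ≠ 0 := hi
          show d i ≠ 0
          have := hsum i
          omega
        have hfin2 : (Function.support fun i => Nat.card {w : W // κ (Sum.inr w) = i}).Finite := by
          apply Set.Finite.subset d.finite_support
          intro i hi
          have hi' : Nat.card {w : W // κ (Sum.inr w) = i} ≠ 0 := hi
          show d i ≠ 0
          have := hsum i
          omega
        set d1 := Finsupp.ofSupportFinite _ hfin1 with hd1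
        set d2 := Finsupp.ofSupportFinite _ hfin2 with hd2
        have hd1a : ∀ i, d1 i = Nat.card {v : V // κ (Sum.inl v) = i} := fun i => rfl
        have hd2a : ∀ i, d2 i = Nat.card {w : W // κ (Sum.inr w) = i} := fun i => rfl
        have hmem : (d1, d2) ∈ antidiagonal d := by
          rw [Finset.HasAntidiagonal.mem_antidiagonal]
          ext i
          rw [Finsupp.add_apply, hd1a, hd2a]
          exact (hsum i).symm
        refine ⟨⟨⟨(d1, d2), hmem⟩,
          ⟨κ ∘ Sum.inl, fun v w h => ((proper_sum_iff G H κ).mp hp).1 v w h,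
            fun i => (hd1a i).symm⟩,
          ⟨κ ∘ Sum.inr, fun v w h => ((proper_sum_iff G H κ).mp hp).2 v w h,
            fun i => (hd2a i).symm⟩⟩, ?_⟩
        exact Subtype.ext helim.symm
    haveI : ∀ p : (antidiagonal d : Finset _),
        Finite ({κ1 : V → ℕ // Proper G κ1 ∧ Cond p.1.1 κ1} ×
          {κ2 : W → ℕ // Proper H κ2 ∧ Cond p.1.2 κ2}) := by
      intro p
      haveI := cond_finite (Proper G) p.1.1
      haveI := cond_finite (Proper H) p.1.2
      infer_instance
    rw [← Nat.card_congr (Equiv.ofBijective _ hbij), nat_card_sigma]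
    rw [← Finset.sum_attach (antidiagonal d)
      (fun p => Nat.card {κ1 : V → ℕ // Proper G κ1 ∧ Cond p.1 κ1} *
        Nat.card {κ2 : W → ℕ // Proper H κ2 ∧ Cond p.2 κ2})]
    refine Finset.sum_congr rfl fun p _ => ?_
    rw [Nat.card_prod]
  rw [key]
  push_cast
  refine Finset.sum_congr rfl fun p _ => ?_
  rw [csf_coeff, csf_coeff]


def eTp (l : ℕ) : (Fin 2 ⊕ Fin l) ≃ Fin (l + 2) where
  toFun a := match a with
    | Sum.inl i => ⟨1 - (i : ℕ), by omega⟩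
    | Sum.inr j => ⟨(j : ℕ) + 2, by have := j.isLt; omega⟩
  invFun k :=
    if h : (k : ℕ) = 0 then Sum.inl 1
    else if h2 : (k : ℕ) = 1 then Sum.inl 0
    else Sum.inr ⟨(k : ℕ) - 2, by have := k.isLt; omega⟩
  left_inv := by
    rintro (i | j)
    · fin_cases i <;> simp
    · have := j.isLt
      simp only []
      rw [dif_neg (by omega), dif_neg (by omega)]
      simp [Fin.ext_iff]
  right_inv := by
    intro k
    have := k.isLt
    by_cases h : (k : ℕ) = 0
    · simp only [dif_pos h]
      exact Fin.ext (by simp; omega)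
    · by_cases h2 : (k : ℕ) = 1
      · simp only [dif_neg h, dif_pos h2]
        exact Fin.ext (by simp; omega)
      · simp only [dif_neg h, dif_neg h2]
        exact Fin.ext (by simp; omega)

lemma tp2_adj (l : ℕ) (a b : Fin 2 ⊕ Fin l) :
    (tadpole 2 l).Adj a b ↔ (pathG (l + 2)).Adj (eTp l a) (eTp l b) := by
  rcases a with i | i <;> rcases b with j | j <;>
    simp only [tadpole, pathG, SimpleGraph.fromRel_adj, eTp, Equiv.coe_fn_mk, ne_eq,
      Sum.inl.injEq, Sum.inr.injEq, Fin.ext_iff, reduceCtorEq] <;>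
    [skip; skip; skip; skip]
  · fin_cases i <;> fin_cases j <;> simp <;> omega
  · fin_cases i <;> (have := j.isLt; simp <;> omega)
  · fin_cases j <;> (have := i.isLt; simp <;> omega)
  · have := i.isLt; have := j.isLt
    constructor
    · rintro ⟨hne, h⟩
      exact ⟨by omega, by omega⟩
    · rintro ⟨hne, h⟩
      exact ⟨by omega, by omega⟩
lemma inl_ne {α β : Type} {a b : α} (h : a ≠ b) : (Sum.inl a : α ⊕ β) ≠ Sum.inl b :=
  fun hh => h (Sum.inl.inj hh)

lemma proper_fromRel_iff {V : Type} (r : V → V → Prop) (κ : V → ℕ) :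
    Proper (SimpleGraph.fromRel r) κ ↔ ∀ v w, v ≠ w → r v w → κ v ≠ κ w := by
  constructor
  · intro h v w hne hr
    exact h v w ((SimpleGraph.fromRel_adj r v w).mpr ⟨hne, Or.inl hr⟩)
  · intro h v w hadj
    rcases (SimpleGraph.fromRel_adj r v w).mp hadj with ⟨hne, hr | hr⟩
    · exact h v w hne hr
    · exact (h w v hne.symm hr).symm

def GD (l : ℕ) : SimpleGraph (Fin 3 ⊕ Fin l) := SimpleGraph.fromRel (fun a b =>
  match a, b with
  | Sum.inl i, Sum.inl j => (i : ℕ) = 1 ∧ (j : ℕ) = 2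
  | Sum.inr i, Sum.inr j => (i : ℕ) + 1 = (j : ℕ)
  | Sum.inl i, Sum.inr j => (i : ℕ) = 0 ∧ (j : ℕ) = 0
  | _, _ => False)
def GA (l : ℕ) : SimpleGraph (Fin 3 ⊕ Fin l) := SimpleGraph.fromRel (fun a b =>
  match a, b with
  | Sum.inl i, Sum.inl j => ((i : ℕ) = 1 ∧ (j : ℕ) = 2) ∨ ((i : ℕ) = 2 ∧ (j : ℕ) = 0)
  | Sum.inr i, Sum.inr j => (i : ℕ) + 1 = (j : ℕ)
  | Sum.inl i, Sum.inr j => (i : ℕ) = 0 ∧ (j : ℕ) = 0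
  | _, _ => False)
def GB (l : ℕ) : SimpleGraph (Fin 3 ⊕ Fin l) := SimpleGraph.fromRel (fun a b =>
  match a, b with
  | Sum.inl i, Sum.inl j => ((i : ℕ) = 0 ∧ (j : ℕ) = 1) ∨ ((i : ℕ) = 1 ∧ (j : ℕ) = 2)
  | Sum.inr i, Sum.inr j => (i : ℕ) + 1 = (j : ℕ)
  | Sum.inl i, Sum.inr j => (i : ℕ) = 0 ∧ (j : ℕ) = 0
  | _, _ => False)

variable {l : ℕ}

lemma hD12 (κ : Fin 3 ⊕ Fin l → ℕ) (h : Proper (GD l) κ) :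
    κ (Sum.inl 1) ≠ κ (Sum.inl 2) :=
  h _ _ ((SimpleGraph.fromRel_adj _ _ _).mpr ⟨inl_ne (by decide),
    Or.inl (show ((1:Fin 3):ℕ) = 1 ∧ ((2:Fin 3):ℕ) = 2 from by decide)⟩)

lemma proper_T_iff (κ : Fin 3 ⊕ Fin l → ℕ) :
    Proper (tadpole 3 l) κ ↔ Proper (GD l) κ ∧
      κ (Sum.inl 0) ≠ κ (Sum.inl 1) ∧ κ (Sum.inl 2) ≠ κ (Sum.inl 0) := by
  rw [show tadpole 3 l = SimpleGraph.fromRel _ from rfl, proper_fromRel_iff,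
    show GD l = SimpleGraph.fromRel _ from rfl, proper_fromRel_iff]
  constructor
  · intro h
    refine ⟨?_, h _ _ (inl_ne (by decide))
        (show (((0:Fin 3):ℕ)+1) % 3 = ((1:Fin 3):ℕ) from by decide),
      h _ _ (inl_ne (by decide))
        (show (((2:Fin 3):ℕ)+1) % 3 = ((0:Fin 3):ℕ) from by decide)⟩
    rintro (i | i) (j | j) hne hr
    · have hr' : (i : ℕ) = 1 ∧ (j : ℕ) = 2 := hr
      have hi := i.isLt; have hj := j.isLt
      exact h _ _ hne (show ((i:ℕ)+1) % 3 = (j:ℕ) from by omega)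
    · exact h _ _ hne hr
    · exact hr.elim
    · exact h _ _ hne hr
  · rintro ⟨hD, h01, h20⟩
    rintro (i | i) (j | j) hne hr
    · have hr' : ((i:ℕ)+1) % 3 = (j:ℕ) := hr
      have hi := i.isLt; have hj := j.isLt
      rcases (by omega : ((i:ℕ) = 0 ∧ (j:ℕ) = 1) ∨ ((i:ℕ) = 1 ∧ (j:ℕ) = 2) ∨
          ((i:ℕ) = 2 ∧ (j:ℕ) = 0)) with ⟨h1, h2⟩ | ⟨h1, h2⟩ | ⟨h1, h2⟩
      · rw [show i = 0 from Fin.ext (by rw [h1]; decide),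
          show j = 1 from Fin.ext (by rw [h2]; decide)]
        exact h01
      · exact hD _ _ hne (show (i:ℕ) = 1 ∧ (j:ℕ) = 2 from ⟨h1, h2⟩)
      · rw [show i = 2 from Fin.ext (by rw [h1]; decide),
          show j = 0 from Fin.ext (by rw [h2]; decide)]
        exact h20
    · exact hD _ _ hne hr
    · exact hr.elim
    · exact hD _ _ hne hr

lemma proper_GA_iff (κ : Fin 3 ⊕ Fin l → ℕ) :
    Proper (GA l) κ ↔ Proper (GD l) κ ∧ κ (Sum.inl 2) ≠ κ (Sum.inl 0) := by
  rw [show GA l = SimpleGraph.fromRel _ from rfl, proper_fromRel_iff,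
    show GD l = SimpleGraph.fromRel _ from rfl, proper_fromRel_iff]
  constructor
  · intro h
    refine ⟨?_, h _ _ (inl_ne (by decide))
        (show (((2:Fin 3):ℕ) = 1 ∧ ((0:Fin 3):ℕ) = 2) ∨
          (((2:Fin 3):ℕ) = 2 ∧ ((0:Fin 3):ℕ) = 0) from by decide)⟩
    rintro (i | i) (j | j) hne hr
    · exact h _ _ hne (Or.inl hr)
    · exact h _ _ hne hr
    · exact hr.elim
    · exact h _ _ hne hr
  · rintro ⟨hD, h20⟩
    rintro (i | i) (j | j) hne hr
    · have hr' : ((i:ℕ) = 1 ∧ (j:ℕ) = 2) ∨ ((i:ℕ) = 2 ∧ (j:ℕ) = 0) := hr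
      rcases hr' with hr' | ⟨h1, h2⟩
      · exact hD _ _ hne (show (i:ℕ) = 1 ∧ (j:ℕ) = 2 from hr')
      · rw [show i = 2 from Fin.ext (by rw [h1]; decide),
          show j = 0 from Fin.ext (by rw [h2]; decide)]
        exact h20
    · exact hD _ _ hne hr
    · exact hr.elim
    · exact hD _ _ hne hr

lemma proper_GB_iff (κ : Fin 3 ⊕ Fin l → ℕ) :
    Proper (GB l) κ ↔ Proper (GD l) κ ∧ κ (Sum.inl 0) ≠ κ (Sum.inl 1) := by
  rw [show GB l = SimpleGraph.fromRel _ from rfl, proper_fromRel_iff,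
    show GD l = SimpleGraph.fromRel _ from rfl, proper_fromRel_iff]
  constructor
  · intro h
    refine ⟨?_, h _ _ (inl_ne (by decide))
        (show (((0:Fin 3):ℕ) = 0 ∧ ((1:Fin 3):ℕ) = 1) ∨
          (((0:Fin 3):ℕ) = 1 ∧ ((1:Fin 3):ℕ) = 2) from by decide)⟩
    rintro (i | i) (j | j) hne hr
    · exact h _ _ hne (Or.inr hr)
    · exact h _ _ hne hr
    · exact hr.elim
    · exact h _ _ hne hr
  · rintro ⟨hD, h01⟩
    rintro (i | i) (j | j) hne hr
    · have hr' : ((i:ℕ) = 0 ∧ (j:ℕ) = 1) ∨ ((i:ℕ) = 1 ∧ (j:ℕ) = 2) := hr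
      rcases hr' with ⟨h1, h2⟩ | hr'
      · rw [show i = 0 from Fin.ext (by rw [h1]; decide),
          show j = 1 from Fin.ext (by rw [h2]; decide)]
        exact h01
      · exact hD _ _ hne (show (i:ℕ) = 1 ∧ (j:ℕ) = 2 from hr')
    · exact hD _ _ hne hr
    · exact hr.elim
    · exact hD _ _ hne hr

def eA (l : ℕ) : (Fin 3 ⊕ Fin l) ≃ Fin (l + 3) where
  toFun a := match a with
    | Sum.inl i => ⟨((i : ℕ) + 2) % 3, by have := i.isLt; omega⟩
    | Sum.inr j => ⟨(j : ℕ) + 3, by have := j.isLt; omega⟩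
  invFun k :=
    if h : (k : ℕ) < 3 then Sum.inl ⟨((k : ℕ) + 1) % 3, by omega⟩
    else Sum.inr ⟨(k : ℕ) - 3, by have := k.isLt; omega⟩
  left_inv := by
    rintro (i | j)
    · have := i.isLt
      simp only []
      rw [dif_pos (by omega)]
      congr 1
      exact Fin.ext (by simp; omega)
    · have := j.isLt
      simp only []
      rw [dif_neg (by omega)]
      exact congrArg Sum.inr (Fin.ext (by simp))
  right_inv := by
    intro k
    have := k.isLt
    by_cases h : (k : ℕ) < 3
    · simp only [dif_pos h]
      exact Fin.ext (by simp; omega)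
    · simp only [dif_neg h]
      exact Fin.ext (by simp; omega)

lemma eA_inl (i : Fin 3) : ((eA l (Sum.inl i) : Fin (l + 3)) : ℕ) = ((i : ℕ) + 2) % 3 := rfl
lemma eA_inr (j : Fin l) : ((eA l (Sum.inr j) : Fin (l + 3)) : ℕ) = (j : ℕ) + 3 := rfl

def eB (l : ℕ) : (Fin 3 ⊕ Fin l) ≃ Fin (l + 3) where
  toFun a := match a with
    | Sum.inl i => ⟨2 - (i : ℕ), by omega⟩
    | Sum.inr j => ⟨(j : ℕ) + 3, by have := j.isLt; omega⟩
  invFun k :=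
    if h : (k : ℕ) < 3 then Sum.inl ⟨2 - (k : ℕ), by omega⟩
    else Sum.inr ⟨(k : ℕ) - 3, by have := k.isLt; omega⟩
  left_inv := by
    rintro (i | j)
    · have := i.isLt
      simp only []
      rw [dif_pos (by omega)]
      congr 1
      exact Fin.ext (by simp; omega)
    · have := j.isLt
      simp only []
      rw [dif_neg (by omega)]
      exact congrArg Sum.inr (Fin.ext (by simp))
  right_inv := by
    intro k
    have := k.isLt
    by_cases h : (k : ℕ) < 3
    · simp only [dif_pos h]
      exact Fin.ext (by simp; omega)
    · simp only [dif_neg h]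
      exact Fin.ext (by simp; omega)

lemma eB_inl (i : Fin 3) : ((eB l (Sum.inl i) : Fin (l + 3)) : ℕ) = 2 - (i : ℕ) := rfl
lemma eB_inr (j : Fin l) : ((eB l (Sum.inr j) : Fin (l + 3)) : ℕ) = (j : ℕ) + 3 := rfl

lemma GA_adj (a b : Fin 3 ⊕ Fin l) :
    (GA l).Adj a b ↔ (pathG (l + 3)).Adj (eA l a) (eA l b) := by
  rw [show GA l = SimpleGraph.fromRel _ from rfl, SimpleGraph.fromRel_adj,
    show pathG (l+3) = SimpleGraph.fromRel _ from rfl, SimpleGraph.fromRel_adj]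
  have hval : ∀ x y : Fin (l+3), x ≠ y ↔ (x : ℕ) ≠ (y : ℕ) := by
    intro x y; rw [Ne, Fin.ext_iff]
  rcases a with i | i <;> rcases b with j | j
  · have hi := i.isLt; have hj := j.isLt
    rw [hval]
    show _ ∧ ((((i:ℕ) = 1 ∧ (j:ℕ) = 2) ∨ ((i:ℕ) = 2 ∧ (j:ℕ) = 0)) ∨
        (((j:ℕ) = 1 ∧ (i:ℕ) = 2) ∨ ((j:ℕ) = 2 ∧ (i:ℕ) = 0))) ↔ _
    rw [eA_inl, eA_inl]
    constructor
    · rintro ⟨hne, h⟩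
      have hne' : (i:ℕ) ≠ (j:ℕ) := fun hh => hne (by rw [Fin.ext hh])
      exact ⟨by omega, by omega⟩
    · rintro ⟨hne, h⟩
      refine ⟨fun hh => ?_, by omega⟩
      have hv : (i:ℕ) = (j:ℕ) := congrArg Fin.val (Sum.inl.inj hh)
      omega
  · have hi := i.isLt; have hj := j.isLt
    rw [hval]
    show _ ∧ ((((i:ℕ) = 0 ∧ (j:ℕ) = 0)) ∨ False) ↔ _
    rw [eA_inl, eA_inr]
    constructor
    · rintro ⟨hne, h | h⟩
      · exact ⟨by omega, by omega⟩
      · exact h.elim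
    · rintro ⟨hne, h | h⟩
      · exact ⟨fun hh => Sum.inl_ne_inr hh, Or.inl ⟨by omega, by omega⟩⟩
      · exact absurd h (by omega)
  · have hi := i.isLt; have hj := j.isLt
    rw [hval]
    show _ ∧ (False ∨ ((j:ℕ) = 0 ∧ (i:ℕ) = 0)) ↔ _
    rw [eA_inr, eA_inl]
    constructor
    · rintro ⟨hne, h | h⟩
      · exact h.elim
      · exact ⟨by omega, by omega⟩
    · rintro ⟨hne, h | h⟩
      · exact absurd h (by omega)
      · exact ⟨fun hh => Sum.inr_ne_inl hh, Or.inr ⟨by omega, by omega⟩⟩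
  · have hi := i.isLt; have hj := j.isLt
    rw [hval]
    show _ ∧ ((i:ℕ) + 1 = (j:ℕ) ∨ (j:ℕ) + 1 = (i:ℕ)) ↔ _
    rw [eA_inr, eA_inr]
    constructor
    · rintro ⟨hne, h⟩
      refine ⟨by omega, by omega⟩
    · rintro ⟨hne, h⟩
      refine ⟨fun hh => ?_, by omega⟩
      have hv : (i:ℕ) = (j:ℕ) := congrArg Fin.val (Sum.inr.inj hh)
      omega

lemma GB_adj (a b : Fin 3 ⊕ Fin l) :
    (GB l).Adj a b ↔ (pathG (l + 3)).Adj (eB l a) (eB l b) := by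
  rw [show GB l = SimpleGraph.fromRel _ from rfl, SimpleGraph.fromRel_adj,
    show pathG (l+3) = SimpleGraph.fromRel _ from rfl, SimpleGraph.fromRel_adj]
  have hval : ∀ x y : Fin (l+3), x ≠ y ↔ (x : ℕ) ≠ (y : ℕ) := by
    intro x y; rw [Ne, Fin.ext_iff]
  rcases a with i | i <;> rcases b with j | j
  · have hi := i.isLt; have hj := j.isLt
    rw [hval]
    show _ ∧ ((((i:ℕ) = 0 ∧ (j:ℕ) = 1) ∨ ((i:ℕ) = 1 ∧ (j:ℕ) = 2)) ∨
        (((j:ℕ) = 0 ∧ (i:ℕ) = 1) ∨ ((j:ℕ) = 1 ∧ (i:ℕ) = 2))) ↔ _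
    rw [eB_inl, eB_inl]
    constructor
    · rintro ⟨hne, h⟩
      have hne' : (i:ℕ) ≠ (j:ℕ) := fun hh => hne (by rw [Fin.ext hh])
      exact ⟨by omega, by omega⟩
    · rintro ⟨hne, h⟩
      refine ⟨fun hh => ?_, by omega⟩
      have hv : (i:ℕ) = (j:ℕ) := congrArg Fin.val (Sum.inl.inj hh)
      omega
  · have hi := i.isLt; have hj := j.isLt
    rw [hval]
    show _ ∧ ((((i:ℕ) = 0 ∧ (j:ℕ) = 0)) ∨ False) ↔ _
    rw [eB_inl, eB_inr]
    constructor
    · rintro ⟨hne, h | h⟩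
      · exact ⟨by omega, by omega⟩
      · exact h.elim
    · rintro ⟨hne, h | h⟩
      · exact ⟨fun hh => Sum.inl_ne_inr hh, Or.inl ⟨by omega, by omega⟩⟩
      · exact absurd h (by omega)
  · have hi := i.isLt; have hj := j.isLt
    rw [hval]
    show _ ∧ (False ∨ ((j:ℕ) = 0 ∧ (i:ℕ) = 0)) ↔ _
    rw [eB_inr, eB_inl]
    constructor
    · rintro ⟨hne, h | h⟩
      · exact h.elim
      · exact ⟨by omega, by omega⟩
    · rintro ⟨hne, h | h⟩
      · exact absurd h (by omega)
      · exact ⟨fun hh => Sum.inr_ne_inl hh, Or.inr ⟨by omega, by omega⟩⟩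
  · have hi := i.isLt; have hj := j.isLt
    rw [hval]
    show _ ∧ ((i:ℕ) + 1 = (j:ℕ) ∨ (j:ℕ) + 1 = (i:ℕ)) ↔ _
    rw [eB_inr, eB_inr]
    constructor
    · rintro ⟨hne, h⟩
      refine ⟨by omega, by omega⟩
    · rintro ⟨hne, h⟩
      refine ⟨fun hh => ?_, by omega⟩
      have hv : (i:ℕ) = (j:ℕ) := congrArg Fin.val (Sum.inr.inj hh)
      omega


lemma fin3 (i : Fin 3) : i = 0 ∨ i = 1 ∨ i = 2 := by revert i; decide

def eD (l : ℕ) : (Fin 3 ⊕ Fin l) ≃ (Fin 2 ⊕ Fin (l + 1)) where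
  toFun a := match a with
    | Sum.inl i => if h : (i : ℕ) = 0 then Sum.inr ⟨0, by omega⟩
        else Sum.inl ⟨(i : ℕ) - 1, by have := i.isLt; omega⟩
    | Sum.inr j => Sum.inr ⟨(j : ℕ) + 1, by have := j.isLt; omega⟩
  invFun b := match b with
    | Sum.inl i => Sum.inl ⟨(i : ℕ) + 1, by have := i.isLt; omega⟩
    | Sum.inr j => if h : (j : ℕ) = 0 then Sum.inl 0
        else Sum.inr ⟨(j : ℕ) - 1, by have := j.isLt; omega⟩
  left_inv := by
    rintro (i | j)
    · by_cases h : (i : ℕ) = 0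
      · simp only [dif_pos h]
        simp [Fin.ext_iff, h]
      · simp only [dif_neg h]
        have := i.isLt
        simp only [Sum.inl.injEq, Fin.ext_iff]
        omega
    · have := j.isLt
      simp [Fin.ext_iff]
  right_inv := by
    rintro (i | j)
    · simp [Fin.ext_iff, -Fin.val_eq_zero_iff]
    · by_cases h : (j : ℕ) = 0
      · simp only [dif_pos h]
        simp [Fin.ext_iff, h]
      · simp only [dif_neg h]
        have := j.isLt
        simp [Fin.ext_iff]
        omega

lemma eD_inl0 : eD l (Sum.inl 0) = Sum.inr ⟨0, by omega⟩ := by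
  simp [eD, -Fin.val_eq_zero_iff]
lemma eD_inl1 : eD l (Sum.inl 1) = Sum.inl ⟨0, by omega⟩ := by
  simp [eD, Fin.ext_iff, -Fin.val_eq_zero_iff]
lemma eD_inl2 : eD l (Sum.inl 2) = Sum.inl ⟨1, by omega⟩ := by
  simp [eD, Fin.ext_iff, show ((2 : Fin 3) : ℕ) = 2 from rfl, -Fin.val_eq_zero_iff]
lemma eD_inr (j : Fin l) : eD l (Sum.inr j) = Sum.inr ⟨(j : ℕ) + 1, by have := j.isLt; omega⟩ :=
  rfl


lemma GD_adj (a b : Fin 3 ⊕ Fin l) :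
    (GD l).Adj a b ↔ ((cycleG 2).sum (pathG (l + 1))).Adj (eD l a) (eD l b) := by
  rw [show GD l = SimpleGraph.fromRel _ from rfl, SimpleGraph.fromRel_adj]
  rcases a with i | i <;> rcases b with j | j
  · rcases fin3 i with rfl | rfl | rfl <;> rcases fin3 j with rfl | rfl | rfl <;>
      simp [eD_inl0, eD_inl1, eD_inl2, SimpleGraph.sum_adj, cycleG, pathG,
        SimpleGraph.fromRel_adj, Fin.ext_iff]
  · rcases fin3 i with rfl | rfl | rfl <;>
      simp [eD_inl0, eD_inl1, eD_inl2, eD_inr, SimpleGraph.sum_adj, cycleG, pathG,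
        SimpleGraph.fromRel_adj, Fin.ext_iff]
  · rcases fin3 j with rfl | rfl | rfl <;>
      simp [eD_inl0, eD_inl1, eD_inl2, eD_inr, SimpleGraph.sum_adj, cycleG, pathG,
        SimpleGraph.fromRel_adj, Fin.ext_iff]
  · simp [eD_inr, SimpleGraph.sum_adj, cycleG, pathG,
      SimpleGraph.fromRel_adj, Fin.ext_iff]

lemma main_count (l : ℕ) (d : ℕ →₀ ℕ) :
    Nat.card {κ : Fin 3 ⊕ Fin l → ℕ // Proper (tadpole 3 l) κ ∧ Cond d κ}
      + Nat.card {κ : Fin 3 ⊕ Fin l → ℕ // Proper (GD l) κ ∧ Cond d κ}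
    = Nat.card {κ : Fin 3 ⊕ Fin l → ℕ // Proper (GA l) κ ∧ Cond d κ}
      + Nat.card {κ : Fin 3 ⊕ Fin l → ℕ // Proper (GB l) κ ∧ Cond d κ} := by
  classical
  haveI := cond_finite (Proper (GA l)) d
  haveI := cond_finite (Proper (GB l)) d
  haveI := cond_finite (Proper (GD l)) d
  haveI := cond_finite (fun κ : Fin 3 ⊕ Fin l → ℕ => Proper (GD l) κ ∧
    κ (Sum.inl 0) ≠ κ (Sum.inl 1)) d
  have iffT : ∀ κ : Fin 3 ⊕ Fin l → ℕ, Proper (tadpole 3 l) κ ↔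
      Proper (GD l) κ ∧ κ (Sum.inl 0) ≠ κ (Sum.inl 1) ∧ κ (Sum.inl 2) ≠ κ (Sum.inl 0) :=
    proper_T_iff
  -- split of A
  have hA : Nat.card {κ : Fin 3 ⊕ Fin l → ℕ // Proper (GA l) κ ∧ Cond d κ}
      = Nat.card {κ : Fin 3 ⊕ Fin l → ℕ //
          (Proper (GD l) κ ∧ κ (Sum.inl 0) = κ (Sum.inl 1)) ∧ Cond d κ}
        + Nat.card {κ : Fin 3 ⊕ Fin l → ℕ // Proper (tadpole 3 l) κ ∧ Cond d κ} := by
    rw [card_split (fun κ => Proper (GA l) κ ∧ Cond d κ)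
      (fun κ => κ (Sum.inl 0) = κ (Sum.inl 1))]
    congr 1
    · apply card_iff
      intro κ
      rw [proper_GA_iff]
      constructor
      · rintro ⟨⟨⟨pd, h20⟩, c⟩, q⟩
        exact ⟨⟨pd, q⟩, c⟩
      · rintro ⟨⟨pd, q⟩, c⟩
        refine ⟨⟨⟨pd, fun e => ?_⟩, c⟩, q⟩
        exact hD12 κ pd (q.symm.trans e.symm)
    · apply card_iff
      intro κ
      rw [proper_GA_iff, iffT]
      constructor
      · rintro ⟨⟨⟨pd, h20⟩, c⟩, q⟩
        exact ⟨⟨pd, q, h20⟩, c⟩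
      · rintro ⟨⟨pd, q, h20⟩, c⟩
        exact ⟨⟨⟨pd, h20⟩, c⟩, q⟩
  -- split of B
  have hB : Nat.card {κ : Fin 3 ⊕ Fin l → ℕ // Proper (GB l) κ ∧ Cond d κ}
      = Nat.card {κ : Fin 3 ⊕ Fin l → ℕ //
          (Proper (GD l) κ ∧ κ (Sum.inl 0) = κ (Sum.inl 2)) ∧ Cond d κ}
        + Nat.card {κ : Fin 3 ⊕ Fin l → ℕ // Proper (tadpole 3 l) κ ∧ Cond d κ} := by
    rw [card_split (fun κ => Proper (GB l) κ ∧ Cond d κ)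
      (fun κ => κ (Sum.inl 0) = κ (Sum.inl 2))]
    congr 1
    · apply card_iff
      intro κ
      rw [proper_GB_iff]
      constructor
      · rintro ⟨⟨⟨pd, h01⟩, c⟩, q⟩
        exact ⟨⟨pd, q⟩, c⟩
      · rintro ⟨⟨pd, q⟩, c⟩
        refine ⟨⟨⟨pd, fun e => ?_⟩, c⟩, q⟩
        exact hD12 κ pd (e.symm.trans q)
    · apply card_iff
      intro κ
      rw [proper_GB_iff, iffT]
      constructor
      · rintro ⟨⟨⟨pd, h01⟩, c⟩, q⟩
        exact ⟨⟨pd, h01, fun e => q e.symm⟩, c⟩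
      · rintro ⟨⟨pd, q, h20⟩, c⟩
        exact ⟨⟨⟨pd, q⟩, c⟩, fun e => h20 e.symm⟩
  -- split of D
  have hD : Nat.card {κ : Fin 3 ⊕ Fin l → ℕ // Proper (GD l) κ ∧ Cond d κ}
      = Nat.card {κ : Fin 3 ⊕ Fin l → ℕ //
          (Proper (GD l) κ ∧ κ (Sum.inl 0) = κ (Sum.inl 1)) ∧ Cond d κ}
        + (Nat.card {κ : Fin 3 ⊕ Fin l → ℕ //
            (Proper (GD l) κ ∧ κ (Sum.inl 0) = κ (Sum.inl 2)) ∧ Cond d κ}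
          + Nat.card {κ : Fin 3 ⊕ Fin l → ℕ // Proper (tadpole 3 l) κ ∧ Cond d κ}) := by
    rw [card_split (fun κ => Proper (GD l) κ ∧ Cond d κ)
      (fun κ => κ (Sum.inl 0) = κ (Sum.inl 1))]
    congr 1
    · apply card_iff
      intro κ
      constructor
      · rintro ⟨⟨pd, c⟩, q⟩
        exact ⟨⟨pd, q⟩, c⟩
      · rintro ⟨⟨pd, q⟩, c⟩
        exact ⟨⟨pd, c⟩, q⟩
    · have reshape : Nat.card {κ : Fin 3 ⊕ Fin l → ℕ //
          (Proper (GD l) κ ∧ Cond d κ) ∧ ¬ κ (Sum.inl 0) = κ (Sum.inl 1)}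
        = Nat.card {κ : Fin 3 ⊕ Fin l → ℕ //
          (fun κ => Proper (GD l) κ ∧ κ (Sum.inl 0) ≠ κ (Sum.inl 1)) κ ∧ Cond d κ} := by
        apply card_iff
        intro κ
        constructor
        · rintro ⟨⟨pd, c⟩, q⟩; exact ⟨⟨pd, q⟩, c⟩
        · rintro ⟨⟨pd, q⟩, c⟩; exact ⟨⟨pd, c⟩, q⟩
      rw [reshape]
      rw [card_split (fun κ => (Proper (GD l) κ ∧ κ (Sum.inl 0) ≠ κ (Sum.inl 1)) ∧ Cond d κ)
        (fun κ => κ (Sum.inl 0) = κ (Sum.inl 2))]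
      congr 1
      · apply card_iff
        intro κ
        constructor
        · rintro ⟨⟨⟨pd, h01⟩, c⟩, q⟩
          exact ⟨⟨pd, q⟩, c⟩
        · rintro ⟨⟨pd, q⟩, c⟩
          refine ⟨⟨⟨pd, fun e => ?_⟩, c⟩, q⟩
          exact hD12 κ pd (e.symm.trans q)
      · apply card_iff
        intro κ
        rw [iffT]
        constructor
        · rintro ⟨⟨⟨pd, h01⟩, c⟩, q⟩
          exact ⟨⟨pd, h01, fun e => q e.symm⟩, c⟩
        · rintro ⟨⟨pd, q, h20⟩, c⟩
          exact ⟨⟨⟨pd, q⟩, c⟩, fun e => h20 e.symm⟩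
  rw [hA, hB, hD]
  ring

end TadpoleAux

-- STATEMENT 11
open TadpoleAux in
theorem tadpole_small_cases (l : ℕ) :
    csf (tadpole 3 l) = 2 * csf (pathG (l + 3)) - csf (cycleG 2) * csf (pathG (l + 1)) ∧
    csf (tadpole 2 l) = csf (pathG (l + 2)) := by
  constructor
  · have hA : csf (GA l) = csf (pathG (l + 3)) := csf_relabel (eA l) GA_adj
    have hB : csf (GB l) = csf (pathG (l + 3)) := csf_relabel (eB l) GB_adj
    have hDsum : csf (GD l) = csf (cycleG 2) * csf (pathG (l + 1)) := by
      rw [← csf_sum]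
      exact csf_relabel (eD l) GD_adj
    have key : csf (tadpole 3 l) = csf (GA l) + csf (GB l) - csf (GD l) := by
      ext d
      rw [map_sub, map_add, csf_coeff, csf_coeff, csf_coeff, csf_coeff]
      have h := main_count l d
      have h' : (Nat.card {κ : Fin 3 ⊕ Fin l → ℕ // Proper (tadpole 3 l) κ ∧ Cond d κ} : ℚ)
          + (Nat.card {κ : Fin 3 ⊕ Fin l → ℕ // Proper (GD l) κ ∧ Cond d κ} : ℚ)
          = (Nat.card {κ : Fin 3 ⊕ Fin l → ℕ // Proper (GA l) κ ∧ Cond d κ} : ℚ)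
          + (Nat.card {κ : Fin 3 ⊕ Fin l → ℕ // Proper (GB l) κ ∧ Cond d κ} : ℚ) := by
        exact_mod_cast congrArg (Nat.cast : ℕ → ℚ) h
      linarith
    rw [key, hA, hB, hDsum]
    ring
  · exact csf_relabel (eTp l) (tp2_adj l)


end
end

section
/- In the ring of formal power series in x and y over the ring of symmetric functions, the double power-sum generating function satisfies the (denominator-cleared) identity (x−y)·E(x)·E(y)·(1 + Σ_{a,b≥1} (−1)^{a+b+1} p_{a+b} x^a y^b) = x·F(y)·E(x) − y·F(x)·E(y). -/
open Finset

noncomputable section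

section Aux

open Finsupp

lemma pSym_zero : pSym 0 = 0 := by
  apply MvPowerSeries.ext; intro d
  show pSym 0 d = (MvPowerSeries.coeff d) 0
  simp [pSym]

lemma neg_one_pow_mul_apply (j : ℕ) (f : SymFun) (d : ℕ →₀ ℕ) :
    ((-1 : SymFun) ^ j * f) d = (-1 : ℚ) ^ j * f d := by
  have h : ((-1 : SymFun)) ^ j = MvPowerSeries.C ((-1 : ℚ) ^ j) := by
    rw [map_pow, map_neg, map_one]
  rw [h]
  exact MvPowerSeries.coeff_C_mul d f _

lemma natCast_mul_apply (n : ℕ) (f : SymFun) (d : ℕ →₀ ℕ) :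
    ((n : SymFun) * f) d = (n : ℚ) * f d := by
  rw [show (n : SymFun) = MvPowerSeries.C (n : ℚ) from (map_natCast (MvPowerSeries.C (σ := ℕ) (R := ℚ)) n).symm]
  exact MvPowerSeries.coeff_C_mul d f _

lemma mul_pSym_apply (f : SymFun) (k : ℕ) (hk : k ≠ 0) (d : ℕ →₀ ℕ) :
    (f * pSym k) d = ∑ i ∈ d.support.filter (fun i => k ≤ d i), f (d - Finsupp.single i k) := by
  classical
  change MvPowerSeries.coeff d (f * pSym k) = _
  rw [MvPowerSeries.coeff_mul]
  set s := d.support.filter (fun i => k ≤ d i) with hs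
  set T := s.image (fun i => (d - Finsupp.single i k, Finsupp.single i k)) with hT
  have hTsub : T ⊆ Finset.HasAntidiagonal.antidiagonal d := by
    intro p hp
    rw [hT, Finset.mem_image] at hp
    obtain ⟨i, hi, rfl⟩ := hp
    rw [hs, Finset.mem_filter] at hi
    rw [Finset.HasAntidiagonal.mem_antidiagonal]
    exact tsub_add_cancel_of_le (Finsupp.single_le_iff.mpr hi.2)
  rw [← Finset.sum_subset hTsub]
  · rw [hT, Finset.sum_image]
    · apply Finset.sum_congr rfl
      intro i hi
      have h2 : MvPowerSeries.coeff (Finsupp.single i k) (pSym k) = 1 := by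
        show pSym k (Finsupp.single i k) = 1
        simp only [pSym]
        rw [if_pos ⟨hk, ⟨i, rfl⟩⟩]
      rw [h2, mul_one]
      rfl
    · intro i hi j hj hij
      exact Finsupp.single_left_injective hk (congrArg Prod.snd hij)
  · intro p hp hpT
    by_contra hne
    have h2 : pSym k p.2 ≠ 0 := by
      intro h0
      apply hne
      show MvPowerSeries.coeff p.1 f * pSym k p.2 = 0
      rw [h0, mul_zero]
    have h3 : ∃ i, p.2 = Finsupp.single i k := by
      by_contra h3
      apply h2
      simp only [pSym]
      rw [if_neg]
      rintro ⟨-, i, hi⟩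
      exact h3 ⟨i, hi⟩
    obtain ⟨i, hi⟩ := h3
    rw [Finset.HasAntidiagonal.mem_antidiagonal] at hp
    apply hpT
    rw [hT, Finset.mem_image]
    refine ⟨i, ?_, ?_⟩
    · rw [hs, Finset.mem_filter]
      have hki : k ≤ d i := by
        have := congrArg (fun f => f i) hp
        simp only [Finsupp.add_apply] at this
        rw [hi] at this
        simp only [Finsupp.single_eq_same] at this
        omega
      refine ⟨Finsupp.mem_support_iff.mpr (by omega), hki⟩
    · have : p.1 = d - Finsupp.single i k := by
        rw [← hi]
        exact eq_tsub_of_add_eq hp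
      rw [← this, ← hi]
  -- done

lemma sum_sub_single {d : ℕ →₀ ℕ} {i k : ℕ} (h : k ≤ d i) :
    ((d - Finsupp.single i k).sum fun _ m => m) + k = d.sum fun _ m => m := by
  have hle : Finsupp.single i k ≤ d := Finsupp.single_le_iff.mpr h
  have hd : (d - Finsupp.single i k) + Finsupp.single i k = d := tsub_add_cancel_of_le hle
  conv_rhs => rw [← hd]
  rw [Finsupp.sum_add_index' (fun _ => rfl) (fun _ _ _ => rfl),
    Finsupp.sum_single_index rfl]

lemma apply_le_sum (d : ℕ →₀ ℕ) (i : ℕ) : d i ≤ d.sum fun _ m => m := by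
  by_cases h : d i = 0
  · simp [h]
  · rw [Finsupp.sum]
    exact Finset.single_le_sum (fun w _ => Nat.zero_le (d w)) (Finsupp.mem_support_iff.mpr h)

lemma sub_single_apply (d : ℕ →₀ ℕ) (i k w : ℕ) :
    (d - Finsupp.single i k) w = if w = i then d i - k else d w := by
  rw [Finsupp.tsub_apply, Finsupp.single_apply]
  by_cases h : w = i
  · subst h; simp
  · rw [if_neg (fun hh => h hh.symm), if_neg h, Nat.sub_zero]

open Classical in
lemma newton_inner (d : ℕ →₀ ℕ) (n i : ℕ) (hi : i ∈ d.support) :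
    (∑ p ∈ Finset.HasAntidiagonal.antidiagonal n,
      if p.2 ≠ 0 ∧ p.2 ≤ d i then (-1 : ℚ) ^ (p.2 + 1) * eSym p.1 (d - Finsupp.single i p.2) else 0)
      = if (∀ w, d w ≤ 1) ∧ (d.sum fun _ m => m) = n then 1 else 0 := by
  classical
  have hdi : 1 ≤ d i := Nat.one_le_iff_ne_zero.mpr (Finsupp.mem_support_iff.mp hi)
  have hiN : d i ≤ d.sum fun _ m => m := apply_le_sum d i
  set N := d.sum fun _ m => m with hN
  -- reindex by second coordinate
  have hswap : (∑ p ∈ Finset.HasAntidiagonal.antidiagonal n,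
      if p.2 ≠ 0 ∧ p.2 ≤ d i then (-1 : ℚ) ^ (p.2 + 1) * eSym p.1 (d - Finsupp.single i p.2) else 0)
      = ∑ k ∈ Finset.range (n + 1),
        if k ≠ 0 ∧ k ≤ d i then (-1 : ℚ) ^ (k + 1) * eSym (n - k) (d - Finsupp.single i k) else 0 := by
    have hsw := Finset.Nat.sum_antidiagonal_swap (n := n)
      (f := fun p => if p.1 ≠ 0 ∧ p.1 ≤ d i then (-1 : ℚ) ^ (p.1 + 1) * eSym p.2 (d - Finsupp.single i p.1) else 0)
    simp only [Prod.fst_swap, Prod.snd_swap] at hsw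
    rw [hsw, Finset.Nat.sum_antidiagonal_eq_sum_range_succ
      (f := fun a b => if a ≠ 0 ∧ a ≤ d i then (-1 : ℚ) ^ (a + 1) * eSym b (d - Finsupp.single i a) else 0)]
  rw [hswap]
  have heval : ∀ k, k ≠ 0 → k ≤ d i → k ≤ n →
      eSym (n - k) (d - Finsupp.single i k)
        = if (∀ w, w ≠ i → d w ≤ 1) ∧ d i - k ≤ 1 ∧ N = n then 1 else 0 := by
    intro k hk0 hk hkn
    have hsum : ((d - Finsupp.single i k).sum fun _ m => m) = N - k := by
      have := sum_sub_single (d := d) (i := i) (k := k) hk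
      omega
    show (if _ then (1:ℚ) else 0) = _
    by_cases hgood : (∀ w, w ≠ i → d w ≤ 1) ∧ d i - k ≤ 1 ∧ N = n
    · rw [if_pos, if_pos hgood]
      constructor
      · intro w
        rw [sub_single_apply]
        by_cases hw : w = i
        · rw [if_pos hw]; exact hgood.2.1
        · rw [if_neg hw]; exact hgood.1 w hw
      · rw [hsum, hgood.2.2]
    · rw [if_neg, if_neg hgood]
      rintro ⟨h1, h2⟩
      apply hgood
      have hNn : N = n := by
        rw [hsum] at h2
        omega
      refine ⟨?_, ?_, hNn⟩
      · intro w hw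
        have := h1 w
        rw [sub_single_apply, if_neg hw] at this
        exact this
      · have := h1 i
        rw [sub_single_apply, if_pos rfl] at this
        exact this
  by_cases hNn : N = n
  · by_cases ho : ∀ w, w ≠ i → d w ≤ 1
    · rcases Nat.lt_or_ge (d i) 2 with hm | hm
      · -- d i = 1 : the answer is 1, coming from k = 1
        have hdi1 : d i = 1 := by omega
        have hSF : (∀ w, d w ≤ 1) ∧ N = n := by
          refine ⟨fun w => ?_, hNn⟩
          by_cases hw : w = i
          · rw [hw, hdi1]
          · exact ho w hw
        rw [if_pos hSF]
        have hn1 : 1 ≤ n := by omega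
        rw [Finset.sum_eq_single_of_mem 1 (Finset.mem_range.mpr (by omega))]
        · rw [if_pos ⟨one_ne_zero, by omega⟩, heval 1 one_ne_zero (by omega) (by omega),
            if_pos ⟨ho, by omega, hNn⟩]
          norm_num
        · intro k hkr hk1
          by_cases hc : k ≠ 0 ∧ k ≤ d i
          · exfalso; omega
          · rw [if_neg hc]
      · -- d i ≥ 2 : cancellation between k = d i - 1 and k = d i
        have hSF : ¬ ((∀ w, d w ≤ 1) ∧ N = n) := by
          rintro ⟨h1, -⟩
          have := h1 i
          omega
        rw [if_neg hSF]
        set m := d i with hm'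
        have hsub : ({m - 1, m} : Finset ℕ) ⊆ Finset.range (n + 1) := by
          intro x hx
          simp only [Finset.mem_insert, Finset.mem_singleton] at hx
          rcases hx with rfl | rfl <;> simp only [Finset.mem_range] <;> omega
        rw [← Finset.sum_subset hsub]
        · rw [Finset.sum_pair (by omega : m - 1 ≠ m)]
          rw [if_pos ⟨by omega, by omega⟩, if_pos ⟨by omega, le_refl m⟩]
          have hmn : m ≤ n := by omega
          rw [heval (m - 1) (by omega) (by omega) (by omega), heval m (by omega) le_rfl hmn]
          rw [if_pos ⟨ho, by omega, hNn⟩, if_pos ⟨ho, by omega, hNn⟩]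
          have h1 : m - 1 + 1 = m := by omega
          rw [h1, pow_succ]
          ring
        · intro k hk hknot
          simp only [Finset.mem_insert, Finset.mem_singleton] at hknot
          push_neg at hknot
          have hkn : k ≤ n := by
            rw [Finset.mem_range] at hk
            omega
          by_cases hc : k ≠ 0 ∧ k ≤ d i
          · rw [if_pos hc, heval k hc.1 hc.2 hkn, if_neg, mul_zero]
            rintro ⟨-, hb, -⟩
            omega
          · rw [if_neg hc]
    · -- some other coordinate is ≥ 2
      push_neg at ho
      obtain ⟨w, hwi, hw2⟩ := ho
      have hSF : ¬ ((∀ w, d w ≤ 1) ∧ N = n) := by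
        rintro ⟨h1, -⟩
        exact absurd (h1 w) (by omega)
      rw [if_neg hSF]
      apply Finset.sum_eq_zero
      intro k hk
      rw [Finset.mem_range] at hk
      by_cases hc : k ≠ 0 ∧ k ≤ d i
      · rw [if_pos hc, heval k hc.1 hc.2 (by omega), if_neg, mul_zero]
        rintro ⟨h1, -, -⟩
        exact absurd (h1 w hwi) (by omega)
      · rw [if_neg hc]
  · rw [if_neg (by rintro ⟨-, h⟩; exact hNn h)]
    apply Finset.sum_eq_zero
    intro k hk
    rw [Finset.mem_range] at hk
    by_cases hc : k ≠ 0 ∧ k ≤ d i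
    · rw [if_pos hc, heval k hc.1 hc.2 (by omega), if_neg, mul_zero]
      rintro ⟨-, -, h⟩
      exact hNn h
    · rw [if_neg hc]

lemma newton (n : ℕ) :
    ∑ p ∈ Finset.HasAntidiagonal.antidiagonal n, eSym p.1 * ((-1 : SymFun) ^ (p.2 + 1) * pSym p.2)
      = (n : SymFun) * eSym n := by
  classical
  apply MvPowerSeries.ext; intro d
  rw [map_sum]
  have hterm : ∀ p ∈ Finset.HasAntidiagonal.antidiagonal n,
      MvPowerSeries.coeff d (eSym p.1 * ((-1 : SymFun) ^ (p.2 + 1) * pSym p.2))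
        = ∑ i ∈ d.support, (if p.2 ≠ 0 ∧ p.2 ≤ d i then
            (-1 : ℚ) ^ (p.2 + 1) * eSym p.1 (d - Finsupp.single i p.2) else 0) := by
    intro p hp
    by_cases hk : p.2 = 0
    · rw [hk, pSym_zero, mul_zero, mul_zero, map_zero]
      exact (Finset.sum_eq_zero (fun i hi => by simp [hk])).symm
    · rw [mul_left_comm]
      show ((-1 : SymFun) ^ (p.2 + 1) * (eSym p.1 * pSym p.2)) d = _
      rw [neg_one_pow_mul_apply, mul_pSym_apply _ _ hk, Finset.mul_sum,
        Finset.sum_filter]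
      apply Finset.sum_congr rfl
      intro i hi
      by_cases hc : p.2 ≤ d i
      · rw [if_pos hc, if_pos ⟨hk, hc⟩]
      · rw [if_neg hc, if_neg (by rintro ⟨-, h⟩; exact hc h)]
  rw [Finset.sum_congr rfl hterm, Finset.sum_comm]
  have hrhs : MvPowerSeries.coeff d ((n : SymFun) * eSym n)
      = (n : ℚ) * eSym n d := natCast_mul_apply n (eSym n) d
  rw [hrhs]
  rw [Finset.sum_congr rfl (fun i hi => newton_inner d n i hi)]
  simp only [eSym]
  by_cases hC : (∀ w, d w ≤ 1) ∧ (d.sum fun _ m => m) = n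
  · rw [if_pos hC]
    have hcard : d.support.card = n := by
      have h1 : (d.sum fun _ m => m) = ∑ w ∈ d.support, d w := rfl
      have h2 : ∑ w ∈ d.support, d w = ∑ w ∈ d.support, 1 := by
        apply Finset.sum_congr rfl
        intro w hw
        have := hC.1 w
        have := Finsupp.mem_support_iff.mp hw
        omega
      have := hC.2
      rw [h1, h2, Finset.sum_const, smul_eq_mul, mul_one] at this
      exact this
    rw [Finset.sum_const, nsmul_eq_mul, hcard, mul_one]
  · rw [if_neg hC]
    simp

/-- `A(z) = Σ_{n≥1} (-1)^{n+1} p_n z^n`. -/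
def Aser (v : Fin 2) : Big :=
  fun d => if ∀ w, w ≠ v → d w = 0 then (-1 : SymFun) ^ (d v + 1) * pSym (d v) else 0

lemma coeff_big (f : Big) (d : Fin 2 →₀ ℕ) : MvPowerSeries.coeff d f = f d := rfl

lemma X_mul_apply (v : Fin 2) (f : Big) (d : Fin 2 →₀ ℕ) :
    MvPowerSeries.coeff d (MvPowerSeries.X v * f)
      = if 1 ≤ d v then MvPowerSeries.coeff (d - Finsupp.single v 1) f else 0 := by
  classical
  rw [show (MvPowerSeries.X v : Big) = MvPowerSeries.monomial (Finsupp.single v 1) 1 from rfl,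
    MvPowerSeries.coeff_monomial_mul]
  by_cases h : 1 ≤ d v
  · rw [if_pos (Finsupp.single_le_iff.mpr h), if_pos h, one_mul]
  · rw [if_neg (fun hc => h (Finsupp.single_le_iff.mp hc)), if_neg h]

lemma sub_single_fin2 (d : Fin 2 →₀ ℕ) (v w : Fin 2) :
    (d - Finsupp.single v 1 : Fin 2 →₀ ℕ) w = if w = v then d v - 1 else d w := by
  rw [Finsupp.tsub_apply, Finsupp.single_apply]
  by_cases h : w = v
  · subst h; simp
  · rw [if_neg (fun hh => h hh.symm), if_neg h, Nat.sub_zero]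

lemma Fser_eq (v : Fin 2) : Fser v = Eser v - MvPowerSeries.X v * Eser' v := by
  classical
  apply MvPowerSeries.ext; intro d
  rw [map_sub, X_mul_apply]
  rw [coeff_big, coeff_big]
  by_cases hv : 1 ≤ d v
  · rw [if_pos hv, coeff_big]
    have haxis : (∀ w, w ≠ v → (d - Finsupp.single v 1 : Fin 2 →₀ ℕ) w = 0)
        ↔ (∀ w, w ≠ v → d w = 0) := by
      constructor <;> intro h w hw <;> have h2 := h w hw
      · rw [sub_single_fin2, if_neg hw] at h2; exact h2
      · rw [sub_single_fin2, if_neg hw]; exact h2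
    simp only [Fser, Eser, Eser']
    by_cases hax : ∀ w, w ≠ v → d w = 0
    · rw [if_pos hax, if_pos hax, if_pos (haxis.mpr hax)]
      rw [sub_single_fin2, if_pos rfl]
      have h1 : d v - 1 + 1 = d v := by omega
      rw [h1]
    · rw [if_neg hax, if_neg hax, if_neg (fun h => hax (haxis.mp h)), sub_zero]
  · rw [if_neg hv]
    have hv0 : d v = 0 := by omega
    simp only [Fser, Eser]
    by_cases hax : ∀ w, w ≠ v → d w = 0
    · rw [if_pos hax, if_pos hax, hv0]
      rw [Nat.cast_zero, zero_mul, sub_zero]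
    · rw [if_neg hax, if_neg hax, sub_zero]

lemma Eser_mul_Aser (v : Fin 2) : Eser v * Aser v = MvPowerSeries.X v * Eser' v := by
  classical
  apply MvPowerSeries.ext; intro d
  rw [MvPowerSeries.coeff_mul, X_mul_apply]
  by_cases hax : ∀ w, w ≠ v → d w = 0
  · have hd : d = Finsupp.single v (d v) := by
      ext w
      rw [Finsupp.single_apply]
      by_cases hw : v = w
      · rw [if_pos hw, hw]
      · rw [if_neg hw]
        exact hax w (fun h => hw h.symm)
    set n := d v with hn
    have hanti : Finset.HasAntidiagonal.antidiagonal d = (Finset.HasAntidiagonal.antidiagonal n).map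
        (Function.Embedding.prodMap ⟨_, Finsupp.single_injective v⟩
          ⟨_, Finsupp.single_injective v⟩) := by
      rw [hd]
      exact Finsupp.antidiagonal_single v n
    rw [hanti, Finset.sum_map]
    have hterm : ∀ p ∈ Finset.HasAntidiagonal.antidiagonal n,
        MvPowerSeries.coeff ((Function.Embedding.prodMap ⟨_, Finsupp.single_injective v⟩
            ⟨_, Finsupp.single_injective v⟩) p).1 (Eser v)
          * MvPowerSeries.coeff ((Function.Embedding.prodMap ⟨_, Finsupp.single_injective v⟩
            ⟨_, Finsupp.single_injective v⟩) p).2 (Aser v)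
        = eSym p.1 * ((-1 : SymFun) ^ (p.2 + 1) * pSym p.2) := by
      intro p hp
      have haxs : ∀ (m : ℕ) (w : Fin 2), w ≠ v → (Finsupp.single v m : Fin 2 →₀ ℕ) w = 0 := by
        intro m w hw
        rw [Finsupp.single_apply, if_neg (fun h => hw h.symm)]
      show Eser v (Finsupp.single v p.1) * Aser v (Finsupp.single v p.2) = _
      simp only [Eser, Aser]
      rw [if_pos (haxs p.1), if_pos (haxs p.2), Finsupp.single_eq_same, Finsupp.single_eq_same]
    rw [Finset.sum_congr rfl hterm, newton]
    by_cases hn1 : 1 ≤ n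
    · rw [hd, if_pos hn1]
      have hss : (Finsupp.single v n - Finsupp.single v 1 : Fin 2 →₀ ℕ)
          = Finsupp.single v (n - 1) := by
        rw [Finsupp.single_tsub]
      rw [hss, coeff_big]
      show _ = Eser' v (Finsupp.single v (n - 1))
      simp only [Eser']
      rw [if_pos, Finsupp.single_eq_same]
      · have h1 : n - 1 + 1 = n := by omega
        rw [h1]
      · intro w hw
        rw [Finsupp.single_apply, if_neg (fun h => hw h.symm)]
    · have hn0 : n = 0 := by omega
      rw [hd, if_neg hn1, hn0, Nat.cast_zero, zero_mul]
  · -- off axis : both sides vanish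
    push_neg at hax
    obtain ⟨w, hwv, hw0⟩ := hax
    have hrhs : (if 1 ≤ d v then
        MvPowerSeries.coeff (d - Finsupp.single v 1) (Eser' v) else 0) = 0 := by
      split_ifs with h
      · rw [coeff_big]
        simp only [Eser']
        rw [if_neg]
        intro hall
        apply hw0
        have h3 := hall w hwv
        rw [sub_single_fin2, if_neg hwv] at h3
        exact h3
      · rfl
    rw [hrhs]
    apply Finset.sum_eq_zero
    intro p hp
    rw [Finset.HasAntidiagonal.mem_antidiagonal] at hp
    have hsum : p.1 w + p.2 w = d w := by
      rw [← hp]; rfl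
    rcases Nat.eq_zero_or_pos (p.1 w) with h1 | h1
    · have h2 : p.2 w ≠ 0 := by omega
      have hz : MvPowerSeries.coeff p.2 (Aser v) = 0 := by
        show Aser v p.2 = 0
        simp only [Aser]
        rw [if_neg (fun hall => h2 (hall w hwv))]
      rw [hz, mul_zero]
    · have hz : MvPowerSeries.coeff p.1 (Eser v) = 0 := by
        show Eser v p.1 = 0
        simp only [Eser]
        rw [if_neg (fun hall => by have := hall w hwv; omega)]
      rw [hz, zero_mul]

lemma axis_apply_0 (e : Fin 2 →₀ ℕ) : (∀ w : Fin 2, w ≠ 0 → e w = 0) ↔ e 1 = 0 := by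
  constructor
  · intro h; exact h 1 (by decide)
  · intro h w hw
    fin_cases w
    · exact absurd rfl hw
    · exact h

lemma axis_apply_1 (e : Fin 2 →₀ ℕ) : (∀ w : Fin 2, w ≠ 1 → e w = 0) ↔ e 0 = 0 := by
  constructor
  · intro h; exact h 0 (by decide)
  · intro h w hw
    fin_cases w
    · exact h
    · exact absurd rfl hw

lemma L2 : (Xv - Yv) * gf2 (fun a b =>
      if 1 ≤ a ∧ 1 ≤ b then (-1 : SymFun) ^ (a + b + 1) * pSym (a + b) else 0)
    = Yv * Aser 0 - Xv * Aser 1 := by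
  classical
  apply MvPowerSeries.ext; intro d
  rw [sub_mul, map_sub, map_sub]
  simp only [Xv, Yv]
  rw [X_mul_apply, X_mul_apply, X_mul_apply, X_mul_apply]
  have h00 : (d - Finsupp.single 0 1 : Fin 2 →₀ ℕ) 0 = d 0 - 1 := by
    rw [sub_single_fin2]; simp
  have h01 : (d - Finsupp.single 0 1 : Fin 2 →₀ ℕ) 1 = d 1 := by
    rw [sub_single_fin2, if_neg (by decide)]
  have h10 : (d - Finsupp.single 1 1 : Fin 2 →₀ ℕ) 0 = d 0 := by
    rw [sub_single_fin2, if_neg (by decide)]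
  have h11 : (d - Finsupp.single 1 1 : Fin 2 →₀ ℕ) 1 = d 1 - 1 := by
    rw [sub_single_fin2]; simp
  have hgf : ∀ e : Fin 2 →₀ ℕ, MvPowerSeries.coeff e (gf2 (fun a b =>
      if 1 ≤ a ∧ 1 ≤ b then (-1 : SymFun) ^ (a + b + 1) * pSym (a + b) else 0))
      = if 1 ≤ e 0 ∧ 1 ≤ e 1 then (-1 : SymFun) ^ (e 0 + e 1 + 1) * pSym (e 0 + e 1) else 0 :=
    fun e => rfl
  have hA0 : ∀ e : Fin 2 →₀ ℕ, MvPowerSeries.coeff e (Aser 0)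
      = if e 1 = 0 then (-1 : SymFun) ^ (e 0 + 1) * pSym (e 0) else 0 := by
    intro e
    rw [coeff_big]
    simp only [Aser]
    by_cases h : e 1 = 0
    · rw [if_pos ((axis_apply_0 e).mpr h), if_pos h]
    · rw [if_neg (fun hh => h ((axis_apply_0 e).mp hh)), if_neg h]
  have hA1 : ∀ e : Fin 2 →₀ ℕ, MvPowerSeries.coeff e (Aser 1)
      = if e 0 = 0 then (-1 : SymFun) ^ (e 1 + 1) * pSym (e 1) else 0 := by
    intro e
    rw [coeff_big]
    simp only [Aser]
    by_cases h : e 0 = 0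
    · rw [if_pos ((axis_apply_1 e).mpr h), if_pos h]
    · rw [if_neg (fun hh => h ((axis_apply_1 e).mp hh)), if_neg h]
  rw [hgf, hgf, hA0, hA1, h00, h01, h10, h11]
  rcases ha : d 0 with - | a <;> rcases hb : d 1 with - | b
  · norm_num
  · -- d 0 = 0
    norm_num
    by_cases hb1 : b = 0
    · subst hb1; simp [pSym_zero]
    · exact fun _ => pSym_zero
  · -- d 1 = 0
    norm_num
    by_cases ha1 : a = 0
    · subst ha1; simp [pSym_zero]
    · exact fun _ => pSym_zero
  · norm_num
    rcases Nat.eq_zero_or_pos a with rfl | hapos <;> rcases Nat.eq_zero_or_pos b with rfl | hbpos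
    · norm_num
    · rw [if_neg (by omega), if_pos (by omega), if_neg (by omega), if_pos rfl]
      try ring_nf
    · rw [if_pos (by omega), if_neg (by omega), if_pos rfl, if_neg (by omega)]
      try ring_nf
    · rw [if_pos (by omega), if_pos (by omega), if_neg (by omega), if_neg (by omega)]
      try ring_nf

end Aux

-- STATEMENT 13
theorem powerSum_double_generating_function :
    (Xv - Yv) * Eser 0 * Eser 1 *
        (1 + gf2 (fun a b => if 1 ≤ a ∧ 1 ≤ b then (-1 : SymFun) ^ (a + b + 1) * pSym (a + b) else 0)) =
      Xv * Fser 1 * Eser 0 - Yv * Fser 0 * Eser 1 := by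
  have hF0 : Fser 0 = Eser 0 - Xv * Eser' 0 := Fser_eq 0
  have hF1 : Fser 1 = Eser 1 - Yv * Eser' 1 := Fser_eq 1
  have h30 : Eser 0 * Aser 0 = Xv * Eser' 0 := Eser_mul_Aser 0
  have h31 : Eser 1 * Aser 1 = Yv * Eser' 1 := Eser_mul_Aser 1
  have h2 := L2
  rw [hF0, hF1]
  linear_combination (Eser 0 * Eser 1) * h2 + (Yv * Eser 1) * h30 - (Xv * Eser 0) * h31

end
end
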